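/- arXiv:1401.2890 — 6 statements merged into one kernel-verified Lean document; each statement's English description precedes it below -/
import Mathlib

section
/- Let a0 ≥ 1 and b0 > 0, and let g : ℝ² → ℝ satisfy the (a0,b0)-foliation conditions. Then for every measurable function f : ℝ² → [0,∞], (1/a0) ∫_{ℝ²} f(x,y) dx dy ≤ ∫_{ℝ²} f(g(x,y), y) dx dy ≤ a0 ∫_{ℝ²} f(x,y) dx dy. -/
open MeasureTheory Filter
open scoped NNReal ENNReal

lemma oneD (a0 : ℝ) (ha0 : 1 ≤ a0) (h : ℝ → ℝ)
    (hb : ∀ x x' : ℝ, x < x' → (x' - x) / a0 ≤ h x' - h x ∧ h x' - h x ≤ a0 * (x' - x))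
    (f : ℝ → ENNReal) (hf : Measurable f) :
    ENNReal.ofReal (1 / a0) * (∫⁻ x, f x) ≤ (∫⁻ x, f (h x)) ∧
      (∫⁻ x, f (h x)) ≤ ENNReal.ofReal a0 * (∫⁻ x, f x) := by
  have ha0' : (0:ℝ) < a0 := lt_of_lt_of_le one_pos ha0
  set K : ℝ≥0 := ⟨a0, ha0'.le⟩ with hK
  have hKcoe : (K : ℝ≥0∞) = ENNReal.ofReal a0 := (ENNReal.ofReal_eq_coe_nnreal ha0'.le).symm
  -- strict monotone
  have hmono : StrictMono h := fun x x' hxx => by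
    have h1 := (hb x x' hxx).1
    have : (0:ℝ) < (x' - x) / a0 := div_pos (by linarith) ha0'
    linarith
  -- Lipschitz of h
  have hlip : LipschitzWith K h := by
    apply LipschitzWith.of_dist_le_mul
    intro x y
    rcases lt_trichotomy x y with hxy | hxy | hxy
    · have := (hb x y hxy).2
      rw [Real.dist_eq, Real.dist_eq, abs_of_nonpos (by linarith [hmono hxy] : h x - h y ≤ 0),
        abs_of_nonpos (by linarith : x - y ≤ 0)]
      change _ ≤ a0 * _; linarith
    · simp [hxy]
    · have := (hb y x hxy).2
      rw [Real.dist_eq, Real.dist_eq, abs_of_nonneg (by linarith [hmono hxy] : (0:ℝ) ≤ h x - h y),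
        abs_of_nonneg (by linarith : (0:ℝ) ≤ x - y)]
      change _ ≤ a0 * _; linarith
  -- surjective
  have hub : ∀ x : ℝ, 0 ≤ x → h 0 + x / a0 ≤ h x := by
    intro x hx
    rcases eq_or_lt_of_le hx with rfl | hx
    · simp
    · have := (hb 0 x hx).1; simp at this; linarith
  have hlb : ∀ x : ℝ, x ≤ 0 → h x ≤ h 0 + x / a0 := by
    intro x hx
    rcases eq_or_lt_of_le hx with rfl | hx
    · simp
    · have := (hb x 0 hx).1
      have : (0 - x) / a0 ≤ h 0 - h x := this
      have hx' : x / a0 = -((0 - x)/a0) := by ring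
      rw [hx']; linarith
  have htop : Tendsto h atTop atTop :=
    tendsto_atTop_mono'
      atTop (by filter_upwards [eventually_ge_atTop (0:ℝ)] with x hx using hub x hx)
      (tendsto_atTop_add_const_left _ _ (Tendsto.atTop_div_const ha0' tendsto_id))
  have hbot : Tendsto h atBot atBot :=
    tendsto_atBot_mono'
      atBot (by filter_upwards [eventually_le_atBot (0:ℝ)] with x hx using hlb x hx)
      (tendsto_atBot_add_const_left _ _ (Tendsto.atBot_div_const ha0' tendsto_id))
  have hsurj : Function.Surjective h := hlip.continuous.surjective htop hbot
  set e : ℝ ≃ ℝ := Equiv.ofBijective h ⟨hmono.injective, hsurj⟩ with he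
  have hecoe : ⇑e = h := rfl
  -- inverse Lipschitz
  have klip : LipschitzWith K e.symm := by
    apply LipschitzWith.of_dist_le_mul
    intro u v
    set x := e.symm u with hx
    set y := e.symm v with hy
    have hu : h x = u := e.apply_symm_apply u
    have hv : h y = v := e.apply_symm_apply v
    have key : ∀ p q : ℝ, p < q → q - p ≤ a0 * (h q - h p) := by
      intro p q hpq
      have := (hb p q hpq).1
      rwa [div_le_iff₀' ha0'] at this
    rcases lt_trichotomy x y with hxy | hxy | hxy
    · have := key x y hxy
      rw [Real.dist_eq, Real.dist_eq, ← hu, ← hv,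
        abs_of_nonpos (by linarith : x - y ≤ 0),
        abs_of_nonpos (by linarith [hmono hxy] : h x - h y ≤ 0)]
      change _ ≤ a0 * _; linarith
    · simp [hx, hy] at hxy ⊢; simp [hxy]
    · have := key y x hxy
      rw [Real.dist_eq, Real.dist_eq, ← hu, ← hv,
        abs_of_nonneg (by linarith : (0:ℝ) ≤ x - y),
        abs_of_nonneg (by linarith [hmono hxy] : (0:ℝ) ≤ h x - h y)]
      change _ ≤ a0 * _; linarith
  -- measure bounds
  have himg : ∀ (F : ℝ → ℝ), LipschitzWith K F → ∀ s : Set ℝ,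
      volume (F '' s) ≤ ENNReal.ofReal a0 * volume s := by
    intro F hF s
    have h1 := hF.hausdorffMeasure_image_le (zero_le_one) s
    rw [MeasureTheory.hausdorffMeasure_real, ENNReal.rpow_one, hKcoe] at h1
    exact h1
  have hmeas : Measurable h := hlip.continuous.measurable
  have hpre1 : ∀ s : Set ℝ, volume (h ⁻¹' s) ≤ ENNReal.ofReal a0 * volume s := by
    intro s
    have hs : h ⁻¹' s = e.symm '' s := by
      rw [Equiv.image_eq_preimage_symm, Equiv.symm_symm]; rfl
    rw [hs]; exact himg e.symm klip s
  have hpre2 : ∀ s : Set ℝ, volume s ≤ ENNReal.ofReal a0 * volume (h ⁻¹' s) := by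
    intro s
    calc volume s = volume (h '' (h ⁻¹' s)) := by rw [Set.image_preimage_eq s hsurj]
      _ ≤ _ := himg h hlip _
  have hM1 : volume.map h ≤ (ENNReal.ofReal a0) • (volume : Measure ℝ) := by
    refine Measure.le_iff.2 fun s hs => ?_
    rw [Measure.map_apply hmeas hs, Measure.smul_apply, smul_eq_mul]
    exact hpre1 s
  have hM2 : (volume : Measure ℝ) ≤ (ENNReal.ofReal a0) • volume.map h := by
    refine Measure.le_iff.2 fun s hs => ?_
    rw [Measure.smul_apply, smul_eq_mul, Measure.map_apply hmeas hs]
    exact hpre2 s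
  have hint : (∫⁻ x, f (h x)) = ∫⁻ y, f y ∂(volume.map h) := (lintegral_map hf hmeas).symm
  constructor
  · have h2 : (∫⁻ x, f x) ≤ ENNReal.ofReal a0 * ∫⁻ y, f y ∂(volume.map h) := by
      calc (∫⁻ x, f x) ≤ ∫⁻ y, f y ∂((ENNReal.ofReal a0) • volume.map h) :=
            lintegral_mono' hM2 le_rfl
        _ = _ := lintegral_smul_measure _ _
    calc ENNReal.ofReal (1 / a0) * (∫⁻ x, f x)
        ≤ ENNReal.ofReal (1 / a0) * (ENNReal.ofReal a0 * ∫⁻ y, f y ∂(volume.map h)) :=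
          mul_le_mul_right h2 _
      _ = ∫⁻ x, f (h x) := by
          rw [← mul_assoc, ← ENNReal.ofReal_mul (by positivity), one_div,
            inv_mul_cancel₀ ha0'.ne', ENNReal.ofReal_one, one_mul, hint]
  · calc (∫⁻ x, f (h x)) = ∫⁻ y, f y ∂(volume.map h) := hint
      _ ≤ ∫⁻ y, f y ∂((ENNReal.ofReal a0) • (volume : Measure ℝ)) :=
          lintegral_mono' hM1 le_rfl
      _ = ENNReal.ofReal a0 * ∫⁻ x, f x := lintegral_smul_measure _ _

/-- Coarea-type formula (3.11): integration over the plane is comparable, with constants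
depending only on `a0`, to integration along the foliation `(x,y) ↦ (g(x,y), y)`. -/
theorem stmt4 (a0 b0 : ℝ) (ha0 : 1 ≤ a0) (hb0 : 0 < b0) (g : ℝ × ℝ → ℝ)
    (hg1 : ∀ x x' y : ℝ, x < x' →
      (x' - x) / a0 ≤ g (x', y) - g (x, y) ∧ g (x', y) - g (x, y) ≤ a0 * (x' - x))
    (hg2 : ∀ x y y' : ℝ, |g (x, y) - g (x, y')| ≤ b0 * |y - y'|) :
    ∀ f : ℝ × ℝ → ENNReal, Measurable f →
      ENNReal.ofReal (1 / a0) * (∫⁻ q : ℝ × ℝ, f q) ≤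
        (∫⁻ q : ℝ × ℝ, f (g q, q.2)) ∧
      (∫⁻ q : ℝ × ℝ, f (g q, q.2)) ≤ ENNReal.ofReal a0 * (∫⁻ q : ℝ × ℝ, f q) := by
  have ha0' : (0:ℝ) < a0 := lt_of_lt_of_le one_pos ha0
  have hgx : ∀ x x' y : ℝ, |g (x', y) - g (x, y)| ≤ a0 * |x' - x| := by
    intro x x' y
    rcases lt_trichotomy x x' with hxx | hxx | hxx
    · have h1 := (hg1 x x' y hxx).1
      have h2 := (hg1 x x' y hxx).2
      have hpos : (0:ℝ) < (x' - x) / a0 := div_pos (by linarith) ha0'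
      rw [abs_of_nonneg (by linarith), abs_of_nonneg (by linarith)]; linarith
    · simp [hxx]
    · have h1 := (hg1 x' x y hxx).1
      have h2 := (hg1 x' x y hxx).2
      have hpos : (0:ℝ) < (x - x') / a0 := div_pos (by linarith) ha0'
      rw [abs_of_nonpos (by linarith), abs_of_nonpos (by linarith)]; linarith
  have hgcont : Continuous g := by
    refine LipschitzWith.continuous (K := ⟨a0 + b0, by positivity⟩)
      (LipschitzWith.of_dist_le_mul fun p q => ?_)
    have t1 := hgx q.1 p.1 p.2
    have t2 := hg2 q.1 p.2 q.2
    have habs : |g p - g q| ≤ a0 * |p.1 - q.1| + b0 * |p.2 - q.2| :=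
      calc |g p - g q| = |(g (p.1, p.2) - g (q.1, p.2)) + (g (q.1, p.2) - g (q.1, q.2))| := by
            ring_nf
        _ ≤ |g (p.1, p.2) - g (q.1, p.2)| + |g (q.1, p.2) - g (q.1, q.2)| := abs_add_le _ _
        _ ≤ a0 * |p.1 - q.1| + b0 * |p.2 - q.2| := add_le_add t1 t2
    have hd1 : dist p.1 q.1 ≤ dist p q := by rw [Prod.dist_eq]; exact le_max_left _ _
    have hd2 : dist p.2 q.2 ≤ dist p q := by rw [Prod.dist_eq]; exact le_max_right _ _
    rw [Real.dist_eq]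
    rw [Real.dist_eq] at hd1 hd2
    change _ ≤ (a0 + b0) * _
    nlinarith [abs_nonneg (p.1 - q.1), abs_nonneg (p.2 - q.2), hb0.le, ha0'.le]
  intro f hf
  have hΦ : Measurable fun q : ℝ × ℝ => f (g q, q.2) :=
    hf.comp (hgcont.measurable.prodMk measurable_snd)
  rw [show (volume : Measure (ℝ × ℝ)) = (volume : Measure ℝ).prod volume from
      Measure.volume_eq_prod ℝ ℝ, lintegral_prod_symm' _ hf, lintegral_prod_symm' _ hΦ]
  have key : ∀ y : ℝ,
      ENNReal.ofReal (1 / a0) * (∫⁻ x, f (x, y)) ≤ (∫⁻ x, f (g (x, y), y)) ∧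
      (∫⁻ x, f (g (x, y), y)) ≤ ENNReal.ofReal a0 * ∫⁻ x, f (x, y) := fun y =>
    oneD a0 ha0 (fun x => g (x, y)) (fun x x' hx => hg1 x x' y hx) (fun t => f (t, y))
      (hf.comp (measurable_id.prodMk measurable_const))
  constructor
  · rw [← lintegral_const_mul' _ _ ENNReal.ofReal_ne_top]
    exact lintegral_mono fun y => (key y).1
  · rw [← lintegral_const_mul' _ _ ENNReal.ofReal_ne_top]
    exact lintegral_mono fun y => (key y).2
end

section
/- Let 0 < b0 < 1 and let h : ℝ → ℝ be Lipschitz with constant b0, and let θ ∈ [−π/4, π/4]. Let R_θ : ℝ² → ℝ² be the rotation R_θ(x,y) = (x cos θ − y sin θ, x sin θ + y cos θ). Then there exists a Lipschitz function g̃ : ℝ → ℝ with Lipschitz constant at most (1+b0)/(1−b0) such that R_θ({(h(y), y) : y ∈ ℝ}) = {(g̃(y'), y') : y' ∈ ℝ}. -/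
open MeasureTheory

/-- Lemma 3.2: a near-vertical Lipschitz graph, after rotation of the coordinate system by an
angle of absolute value at most `π/4`, is again a Lipschitz graph over the new vertical axis,
with Lipschitz constant at most `(1+b0)/(1-b0)`. -/
theorem stmt5 (b0 : ℝ) (hb0 : 0 < b0) (hb0' : b0 < 1) (h : ℝ → ℝ)
    (hLip : LipschitzWith (Real.toNNReal b0) h) (θ : ℝ) (hθ : |θ| ≤ Real.pi / 4) :
    ∃ gt : ℝ → ℝ, LipschitzWith (Real.toNNReal ((1 + b0) / (1 - b0))) gt ∧
      (fun p : ℝ × ℝ =>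
          (p.1 * Real.cos θ - p.2 * Real.sin θ, p.1 * Real.sin θ + p.2 * Real.cos θ)) ''
        {p : ℝ × ℝ | ∃ y : ℝ, p = (h y, y)} =
      {p : ℝ × ℝ | ∃ y' : ℝ, p = (gt y', y')} := by
  have hπ := Real.pi_pos
  set c := Real.cos θ with hc_def
  set s := Real.sin θ with hs_def
  -- cos θ ≥ √2/2 > 0 and |sin θ| ≤ cos θ
  have hcos4 : Real.cos (Real.pi / 4) ≤ c := by
    have := Real.cos_le_cos_of_nonneg_of_le_pi (abs_nonneg θ) (by linarith) hθ
    rwa [Real.cos_abs] at this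
  have hc2 : Real.sqrt 2 / 2 ≤ c := by rwa [Real.cos_pi_div_four] at hcos4
  have hsq2 : (Real.sqrt 2) ^ 2 = 2 := Real.sq_sqrt (by norm_num)
  have hsqrt2 : (0:ℝ) < Real.sqrt 2 / 2 := by positivity
  have hc_pos : 0 < c := lt_of_lt_of_le hsqrt2 hc2
  have hsc : |s| ≤ c := by
    have h1 : s ^ 2 + c ^ 2 = 1 := Real.sin_sq_add_cos_sq θ
    nlinarith [sq_abs s, abs_nonneg s]
  -- Lipschitz bound in real form
  have hb' : ∀ y₁ y₂ : ℝ, |h y₁ - h y₂| ≤ b0 * |y₁ - y₂| := by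
    intro y₁ y₂
    have := hLip.dist_le_mul y₁ y₂
    rwa [Real.dist_eq, Real.dist_eq, Real.coe_toNNReal b0 hb0.le] at this
  set φ : ℝ → ℝ := fun y => h y * s + y * c with hφ_def
  set ψ : ℝ → ℝ := fun y => h y * c - y * s with hψ_def
  have hd_pos : 0 < c - b0 * |s| := by nlinarith [abs_nonneg s]
  -- lower bound on φ increments
  have hφ_low : ∀ y₁ y₂ : ℝ, (c - b0 * |s|) * |y₁ - y₂| ≤ |φ y₁ - φ y₂| := by
    intro y₁ y₂
    have h1 : φ y₁ - φ y₂ = (y₁ - y₂) * c - -((h y₁ - h y₂) * s) := by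
      simp only [hφ_def]; ring
    rw [h1]
    have h2 := abs_sub_abs_le_abs_sub ((y₁ - y₂) * c) (-((h y₁ - h y₂) * s))
    rw [abs_neg, abs_mul, abs_mul, abs_of_pos hc_pos] at h2
    nlinarith [hb' y₁ y₂, abs_nonneg s, abs_nonneg (y₁ - y₂)]
  have hψ_up : ∀ y₁ y₂ : ℝ, |ψ y₁ - ψ y₂| ≤ (b0 * c + |s|) * |y₁ - y₂| := by
    intro y₁ y₂
    have h1 : ψ y₁ - ψ y₂ = (h y₁ - h y₂) * c + (-(y₁ - y₂)) * s := by
      simp only [hψ_def]; ring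
    rw [h1]
    calc |(h y₁ - h y₂) * c + (-(y₁ - y₂)) * s|
        ≤ |(h y₁ - h y₂) * c| + |(-(y₁ - y₂)) * s| := abs_add_le _ _
      _ = |h y₁ - h y₂| * c + |y₁ - y₂| * |s| := by
          rw [abs_mul, abs_mul, abs_of_pos hc_pos, abs_neg]
      _ ≤ (b0 * c + |s|) * |y₁ - y₂| := by
          nlinarith [hb' y₁ y₂, abs_nonneg (y₁ - y₂)]
  -- φ is strictly monotone
  have hφ_mono : StrictMono φ := by
    intro y₂ y₁ hlt
    have h1 : |h y₁ - h y₂| ≤ b0 * (y₁ - y₂) := by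
      have := hb' y₁ y₂
      rwa [abs_of_pos (by linarith : (0:ℝ) < y₁ - y₂)] at this
    have h5 := neg_abs_le ((h y₁ - h y₂) * s)
    rw [abs_mul] at h5
    have h6 : |h y₁ - h y₂| * |s| ≤ b0 * (y₁ - y₂) * |s| := by
      nlinarith [abs_nonneg s]
    have h7 : φ y₁ - φ y₂ = (h y₁ - h y₂) * s + (y₁ - y₂) * c := by
      simp only [hφ_def]; ring
    have : 0 < φ y₁ - φ y₂ := by
      rw [h7]; nlinarith [abs_nonneg s]
    linarith
  have hφ_cont : Continuous φ := by
    have hh : Continuous h := hLip.continuous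
    fun_prop
  have hφ_top : Filter.Tendsto φ Filter.atTop Filter.atTop := by
    rw [Filter.tendsto_atTop]
    intro b
    filter_upwards [Filter.eventually_ge_atTop
      (max 0 ((b - φ 0) / (c - b0 * |s|)))] with y hy
    have hy0 : 0 ≤ y := le_trans (le_max_left _ _) hy
    have hy1 : (b - φ 0) / (c - b0 * |s|) ≤ y := le_trans (le_max_right _ _) hy
    have hlow := hφ_low y 0
    have h2 : φ 0 ≤ φ y := hφ_mono.monotone hy0
    rw [sub_zero, abs_of_nonneg hy0,
      abs_of_nonneg (by linarith : (0:ℝ) ≤ φ y - φ 0)] at hlow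
    have h3 : b - φ 0 ≤ y * (c - b0 * |s|) := (div_le_iff₀ hd_pos).1 hy1
    linarith
  have hφ_bot : Filter.Tendsto φ Filter.atBot Filter.atBot := by
    rw [Filter.tendsto_atBot]
    intro b
    filter_upwards [Filter.eventually_le_atBot
      (min 0 ((b - φ 0) / (c - b0 * |s|)))] with y hy
    have hy0 : y ≤ 0 := le_trans hy (min_le_left _ _)
    have hy1 : y ≤ (b - φ 0) / (c - b0 * |s|) := le_trans hy (min_le_right _ _)
    have hlow := hφ_low 0 y
    have h2 : φ y ≤ φ 0 := hφ_mono.monotone hy0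
    rw [zero_sub, abs_neg, abs_of_nonpos hy0,
      abs_of_nonneg (by linarith : (0:ℝ) ≤ φ 0 - φ y)] at hlow
    have h3 : y * (c - b0 * |s|) ≤ b - φ 0 := (le_div_iff₀ hd_pos).1 hy1
    nlinarith
  have hφ_surj : Function.Surjective φ := hφ_cont.surjective hφ_top hφ_bot
  have hφ_inj : Function.Injective φ := hφ_mono.injective
  set φinv := Function.invFun φ with hφinv_def
  have hright : ∀ y', φ (φinv y') = y' := fun y' => Function.invFun_eq (hφ_surj y')
  have hleft : ∀ y, φinv (φ y) = y := fun y => Function.leftInverse_invFun hφ_inj y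
  refine ⟨fun y' => ψ (φinv y'), ?_, ?_⟩
  · -- Lipschitz bound
    have hK : (0:ℝ) ≤ (1 + b0) / (1 - b0) := div_nonneg (by linarith) (by linarith)
    apply LipschitzWith.of_dist_le_mul
    intro a b
    rw [Real.dist_eq, Real.dist_eq, Real.coe_toNNReal _ hK]
    set y₁ := φinv a
    set y₂ := φinv b
    have h1 := hψ_up y₁ y₂
    have h2 := hφ_low y₁ y₂
    rw [hright, hright] at h2
    have hkey : (b0 * c + |s|) * (1 - b0) ≤ (1 + b0) * (c - b0 * |s|) := by
      nlinarith [mul_le_mul_of_nonneg_left hsc (sq_nonneg b0)]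
    have h3 : (b0 * c + |s|) * |y₁ - y₂| ≤ (1 + b0) / (1 - b0) * |a - b| := by
      rw [div_mul_eq_mul_div, le_div_iff₀ (by linarith : (0:ℝ) < 1 - b0)]
      nlinarith [abs_nonneg (a - b), abs_nonneg (y₁ - y₂)]
    linarith
  · -- set equality
    ext p
    simp only [Set.mem_image, Set.mem_setOf_eq]
    constructor
    · rintro ⟨q, ⟨y, rfl⟩, rfl⟩
      refine ⟨φ y, ?_⟩
      simp only [hleft y]; simp [hψ_def, hφ_def]
    · rintro ⟨y', rfl⟩
      refine ⟨(h (φinv y'), φinv y'), ⟨φinv y', rfl⟩, ?_⟩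
      have h5 := hright y'
      simp only [hφ_def] at h5
      simp only [Prod.mk.injEq]
      exact ⟨by simp [hψ_def], h5⟩
end

section
/- Let φ : ℝ² → ℂ and γ : ℝ → ℂ be Schwartz functions, and let u ∈ ℝ. Suppose that supp(𝓕γ) ∩ { ξ + uη : (ξ,η) ∈ supp(𝓕φ) } = ∅. Then for every (x,y) ∈ ℝ², ∫_ℝ γ(t) · φ(x − t, y − u t) dt = 0. -/
open MeasureTheory FourierTransform Complex

noncomputable def Lmap : EuclideanSpace ℝ (Fin 2) ≃L[ℝ] ℝ × ℝ :=
  (PiLp.continuousLinearEquiv 2 ℝ (fun _ : Fin 2 => ℝ)).trans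
    (ContinuousLinearEquiv.finTwoArrow ℝ ℝ)

noncomputable def eM : EuclideanSpace ℝ (Fin 2) ≃ᵐ ℝ × ℝ :=
  (MeasurableEquiv.toLp 2 (Fin 2 → ℝ)).symm.trans MeasurableEquiv.finTwoArrow

lemma eM_mp : MeasurePreserving (eM : EuclideanSpace ℝ (Fin 2) ≃ᵐ ℝ × ℝ) volume volume :=
  (volume_preserving_finTwoArrow ℝ).comp (EuclideanSpace.volume_preserving_symm_measurableEquiv_toLp (Fin 2))

section
variable (φ : SchwartzMap (ℝ × ℝ) ℂ) (Fφ : ℝ × ℝ → ℂ)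
    (hFφ : ∀ w : ℝ × ℝ, Fφ w =
      ∫ p : ℝ × ℝ, φ p * Complex.exp
        (-(2 * (Real.pi : ℂ) * Complex.I * ((p.1 : ℂ) * (w.1 : ℂ) + (p.2 : ℂ) * (w.2 : ℂ)))))

noncomputable def psiOf : SchwartzMap (EuclideanSpace ℝ (Fin 2)) ℂ :=
  SchwartzMap.compCLMOfContinuousLinearEquiv ℂ Lmap φ

lemma psiOf_apply (v : EuclideanSpace ℝ (Fin 2)) : psiOf φ v = φ (Lmap v) := rfl

include hFφ in
lemma stepA : ∀ w : EuclideanSpace ℝ (Fin 2),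
    𝓕 (psiOf φ : EuclideanSpace ℝ (Fin 2) → ℂ) w = Fφ (Lmap w) := by
  intro w
  rw [Real.fourier_eq', hFφ]
  rw [← MeasurePreserving.integral_comp' (f := eM) eM_mp
    (fun p : ℝ × ℝ => φ p * Complex.exp
      (-(2 * (Real.pi : ℂ) * Complex.I *
        ((p.1 : ℂ) * ((Lmap w).1 : ℂ) + (p.2 : ℂ) * ((Lmap w).2 : ℂ)))))]
  congr 1
  ext v
  have hv : (eM v : ℝ × ℝ) = (v 0, v 1) := rfl
  have hinner : (inner ℝ v w : ℝ) = v 0 * w 0 + v 1 * w 1 := by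
    simp [PiLp.inner_apply, RCLike.inner_apply, Fin.sum_univ_two, mul_comm]
  have hw1 : (Lmap w).1 = w 0 := rfl
  have hw2 : (Lmap w).2 = w 1 := rfl
  rw [hv, smul_eq_mul, mul_comm]
  have hps : (psiOf φ) v = φ (v 0, v 1) := rfl
  rw [hps]
  congr 1
  rw [hinner, hw1, hw2]
  push_cast
  ring_nf

include hFφ in
lemma hFφ_cont : Continuous Fφ := by
  have h1 : Fφ = (SchwartzMap.fourierTransformCLM ℂ (psiOf φ) :
      EuclideanSpace ℝ (Fin 2) → ℂ) ∘ Lmap.symm := by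
    ext q
    simp only [Function.comp_apply, SchwartzMap.fourierTransformCLM_apply]
    change Fφ q = 𝓕 (psiOf φ : EuclideanSpace ℝ (Fin 2) → ℂ) (Lmap.symm q)
    rw [stepA φ Fφ hFφ, Lmap.apply_symm_apply]
  rw [h1]
  exact (SchwartzMap.fourierTransformCLM ℂ (psiOf φ)).continuous.comp Lmap.symm.continuous

include hFφ in
lemma hFφ_int : Integrable Fφ := by
  have h1 : Fφ = (SchwartzMap.fourierTransformCLM ℂ (psiOf φ) :
      EuclideanSpace ℝ (Fin 2) → ℂ) ∘ (eM.symm : ℝ × ℝ → EuclideanSpace ℝ (Fin 2)) := by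
    ext q
    simp only [Function.comp_apply, SchwartzMap.fourierTransformCLM_apply]
    change Fφ q = 𝓕 (psiOf φ : EuclideanSpace ℝ (Fin 2) → ℂ) (eM.symm q)
    rw [stepA φ Fφ hFφ]
    have : Lmap (eM.symm q : EuclideanSpace ℝ (Fin 2)) = q := Lmap.apply_symm_apply q
    rw [this]
  rw [h1]
  exact (MeasurePreserving.integrable_comp_emb eM_mp.symm eM.symm.measurableEmbedding).mpr
    (SchwartzMap.fourierTransformCLM ℂ (psiOf φ)).integrable

include hFφ in
lemma hinv : ∀ a b : ℝ, φ (a, b) =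
    ∫ q : ℝ × ℝ, Fφ q * Complex.exp
      (2 * (Real.pi : ℂ) * Complex.I * ((a : ℂ) * (q.1 : ℂ) + (b : ℂ) * (q.2 : ℂ))) := by
  intro a b
  have hFψint : Integrable (𝓕 (psiOf φ : EuclideanSpace ℝ (Fin 2) → ℂ)) := by
    have : 𝓕 (psiOf φ : EuclideanSpace ℝ (Fin 2) → ℂ)
        = (SchwartzMap.fourierTransformCLM ℂ (psiOf φ) : EuclideanSpace ℝ (Fin 2) → ℂ) := rfl
    rw [this]; exact (SchwartzMap.fourierTransformCLM ℂ (psiOf φ)).integrable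
  have hI := (psiOf φ).continuous.fourierInv_fourier_eq (psiOf φ).integrable hFψint
  have hv : psiOf φ (Lmap.symm (a, b)) = φ (a, b) := by
    rw [psiOf_apply, Lmap.apply_symm_apply]
  rw [← hv, ← congrFun hI (Lmap.symm (a, b))]
  rw [Real.fourierInv_eq']
  rw [← MeasurePreserving.integral_comp' (f := eM) eM_mp
    (fun q : ℝ × ℝ => Fφ q * Complex.exp
      (2 * (Real.pi : ℂ) * Complex.I * ((a : ℂ) * (q.1 : ℂ) + (b : ℂ) * (q.2 : ℂ))))]
  congr 1
  ext w
  have hq : (eM w : ℝ × ℝ) = Lmap w := rfl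
  have hinner : (inner ℝ w (Lmap.symm (a, b)) : ℝ) = w 0 * a + w 1 * b := by
    have h0 : (Lmap.symm (a, b)) 0 = a := rfl
    have h1 : (Lmap.symm (a, b)) 1 = b := rfl
    simp [PiLp.inner_apply, RCLike.inner_apply, Fin.sum_univ_two, h0, h1, mul_comm]
  rw [hq, smul_eq_mul, stepA φ Fφ hFφ w, mul_comm]
  have hw1 : (Lmap w).1 = w 0 := rfl
  have hw2 : (Lmap w).2 = w 1 := rfl
  congr 1
  rw [hinner, hw1, hw2]
  push_cast
  ring_nf

end

/-- Lemma 5.2: if the frequency support of the one-dimensional kernel `γ` is disjoint from the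
projection `{ξ + uη}` of the frequency support of `φ` along the direction `(1,u)`, then the
directional convolution vanishes identically. -/
theorem stmt11 (φ : SchwartzMap (ℝ × ℝ) ℂ) (γ : SchwartzMap ℝ ℂ) (u : ℝ)
    (Fγ : ℝ → ℂ)
    (hFγ : ∀ ξ : ℝ, Fγ ξ =
      ∫ t : ℝ, γ t * Complex.exp (-(2 * (Real.pi : ℂ) * Complex.I * (t : ℂ) * (ξ : ℂ))))
    (Fφ : ℝ × ℝ → ℂ)
    (hFφ : ∀ w : ℝ × ℝ, Fφ w =
      ∫ p : ℝ × ℝ, φ p * Complex.exp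
        (-(2 * (Real.pi : ℂ) * Complex.I * ((p.1 : ℂ) * (w.1 : ℂ) + (p.2 : ℂ) * (w.2 : ℂ)))))
    (hdisj : tsupport Fγ ∩ {s : ℝ | ∃ q ∈ tsupport Fφ, s = q.1 + u * q.2} = ∅) :
    ∀ x y : ℝ, ∫ t : ℝ, γ t * φ (x - t, y - u * t) = 0 := by
  intro x y
  have hFc := hFφ_cont φ Fφ hFφ
  have hFi := hFφ_int φ Fφ hFφ
  set f : ℝ → ℝ × ℝ → ℂ := fun t q =>
    γ t * (Fφ q * Complex.exp
      (2 * (Real.pi : ℂ) * Complex.I *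
        (((x - t : ℝ) : ℂ) * (q.1 : ℂ) + ((y - u * t : ℝ) : ℂ) * (q.2 : ℂ)))) with hf
  have h1 : ∀ t : ℝ, γ t * φ (x - t, y - u * t) = ∫ q : ℝ × ℝ, f t q := by
    intro t
    rw [hinv φ Fφ hFφ (x - t) (y - u * t), ← integral_const_mul]
  -- integrability of the uncurried function
  have hcont : Continuous (Function.uncurry f) := by
    apply Continuous.mul
    · exact γ.continuous.comp continuous_fst
    · apply Continuous.mul
      · exact hFc.comp continuous_snd
      · apply Complex.continuous_exp.comp
        fun_prop
  have hbound : Integrable (fun z : ℝ × (ℝ × ℝ) => ‖γ z.1‖ * ‖Fφ z.2‖)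
      (volume.prod volume) := (γ.integrable.norm).mul_prod hFi.norm
  have hint : Integrable (Function.uncurry f) (volume.prod volume) := by
    refine hbound.mono' hcont.aestronglyMeasurable (Filter.Eventually.of_forall ?_)
    rintro ⟨t, q⟩
    have hexp : ‖Complex.exp (2 * (Real.pi : ℂ) * Complex.I *
        (((x - t : ℝ) : ℂ) * (q.1 : ℂ) + ((y - u * t : ℝ) : ℂ) * (q.2 : ℂ)))‖ = 1 := by
      have h : 2 * (Real.pi : ℂ) * Complex.I *
          (((x - t : ℝ) : ℂ) * (q.1 : ℂ) + ((y - u * t : ℝ) : ℂ) * (q.2 : ℂ))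
          = ((2 * Real.pi * ((x - t) * q.1 + (y - u * t) * q.2) : ℝ) : ℂ) * Complex.I := by
        push_cast; ring
      rw [h, Complex.norm_exp_ofReal_mul_I]
    simp only [Function.uncurry, hf, norm_mul, hexp, mul_one, le_refl]
  -- key pointwise vanishing of the q-integrand after swapping
  have key : ∀ q : ℝ × ℝ, (∫ t : ℝ, f t q) = 0 := by
    intro q
    have hsplit : ∀ t : ℝ, f t q =
        (Fφ q * Complex.exp (2 * (Real.pi : ℂ) * Complex.I *
          ((x : ℂ) * (q.1 : ℂ) + (y : ℂ) * (q.2 : ℂ)))) *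
        (γ t * Complex.exp (-(2 * (Real.pi : ℂ) * Complex.I * (t : ℂ) *
          ((q.1 + u * q.2 : ℝ) : ℂ)))) := by
      intro t
      have hE : Complex.exp (2 * (Real.pi : ℂ) * Complex.I *
          (((x - t : ℝ) : ℂ) * (q.1 : ℂ) + ((y - u * t : ℝ) : ℂ) * (q.2 : ℂ)))
          = Complex.exp (2 * (Real.pi : ℂ) * Complex.I *
              ((x : ℂ) * (q.1 : ℂ) + (y : ℂ) * (q.2 : ℂ))) *
            Complex.exp (-(2 * (Real.pi : ℂ) * Complex.I * (t : ℂ) *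
              ((q.1 + u * q.2 : ℝ) : ℂ))) := by
        rw [← Complex.exp_add]
        congr 1
        push_cast
        ring
      rw [hf]
      simp only []
      rw [hE]
      ring
    calc (∫ t : ℝ, f t q)
        = ∫ t : ℝ, (Fφ q * Complex.exp (2 * (Real.pi : ℂ) * Complex.I *
            ((x : ℂ) * (q.1 : ℂ) + (y : ℂ) * (q.2 : ℂ)))) *
          (γ t * Complex.exp (-(2 * (Real.pi : ℂ) * Complex.I * (t : ℂ) *
            ((q.1 + u * q.2 : ℝ) : ℂ)))) := by
          exact integral_congr_ae (Filter.Eventually.of_forall hsplit)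
      _ = (Fφ q * Complex.exp (2 * (Real.pi : ℂ) * Complex.I *
            ((x : ℂ) * (q.1 : ℂ) + (y : ℂ) * (q.2 : ℂ)))) * Fγ (q.1 + u * q.2) := by
          rw [integral_const_mul, ← hFγ (q.1 + u * q.2)]
      _ = 0 := by
          by_cases hq : q ∈ tsupport Fφ
          · have hs : Fγ (q.1 + u * q.2) = 0 := by
              apply image_eq_zero_of_notMem_tsupport
              intro hmem
              have : (q.1 + u * q.2) ∈ tsupport Fγ ∩
                  {s : ℝ | ∃ p ∈ tsupport Fφ, s = p.1 + u * p.2} :=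
                ⟨hmem, ⟨q, hq, rfl⟩⟩
              rw [hdisj] at this
              exact this
            rw [hs, mul_zero]
          · have hzero : Fφ q = 0 := image_eq_zero_of_notMem_tsupport hq
            rw [hzero, zero_mul, zero_mul]
  calc (∫ t : ℝ, γ t * φ (x - t, y - u * t))
      = ∫ t : ℝ, ∫ q : ℝ × ℝ, f t q := integral_congr_ae (Filter.Eventually.of_forall h1)
    _ = ∫ q : ℝ × ℝ, ∫ t : ℝ, f t q := integral_integral_swap hint
    _ = 0 := by simp [key]
end

section
/- Let φ : ℝ² → ℂ be a Schwartz function and let τ, b ∈ ℝ. Define h : ℝ → ℂ by h(y) := φ(τ y + b, y). Then h is a Schwartz function and its Fourier transform satisfies supp(𝓕h) ⊆ closure of { τξ + η : (ξ,η) ∈ supp(𝓕φ) }. Consequently, if m : ℝ → ℂ is a bounded continuous function with m(σ) = 1 for every σ in that closure, then 𝓕h = m · 𝓕h. -/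
open MeasureTheory

open MeasureTheory FourierTransform Real SchwartzMap

noncomputable section Aux12

lemma aux12_affine_temperate {E F : Type*} [NormedAddCommGroup E] [NormedSpace ℝ E]
    [NormedAddCommGroup F] [NormedSpace ℝ F] (L : E →L[ℝ] F) (c : F) :
    Function.HasTemperateGrowth (fun x => L x + c) := by
  apply Function.HasTemperateGrowth.of_fderiv (k := 1) (C := ‖L‖ + ‖c‖)
  · have h : (fderiv ℝ fun x : E => L x + c) = fun _ => L := by
      funext x
      rw [fderiv_add_const]
      exact L.fderiv
    rw [h]
    exact Function.HasTemperateGrowth.const _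
  · exact L.differentiable.add_const c
  · intro x
    have h1 := L.le_opNorm x
    have h2 : ‖L x + c‖ ≤ ‖L x‖ + ‖c‖ := norm_add_le _ _
    have h3 : (0:ℝ) ≤ ‖L‖ := norm_nonneg _
    have h4 : (0:ℝ) ≤ ‖c‖ := norm_nonneg _
    have h5 : (0:ℝ) ≤ ‖x‖ := norm_nonneg _
    nlinarith

abbrev E2 : Type := EuclideanSpace ℝ (Fin 2)

def jfun (q : ℝ × ℝ) : E2 := (EuclideanSpace.equiv (Fin 2) ℝ).symm ![q.1, q.2]

@[simp] lemma jfun_apply0 (q : ℝ × ℝ) : jfun q 0 = q.1 := rfl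
@[simp] lemma jfun_apply1 (q : ℝ × ℝ) : jfun q 1 = q.2 := rfl

lemma aux12_coord_le (x : E2) (i : Fin 2) : ‖x i‖ ≤ ‖x‖ := by
  have h : ‖x i‖ ^ 2 ≤ ∑ j, ‖x j‖ ^ 2 :=
    Finset.single_le_sum (f := fun j => ‖x j‖ ^ 2) (fun j _ => sq_nonneg _) (Finset.mem_univ i)
  have := Real.sqrt_le_sqrt h
  rwa [Real.sqrt_sq (norm_nonneg _), ← EuclideanSpace.norm_eq] at this

def mE : E2 ≃ᵐ ℝ × ℝ :=
  (MeasurableEquiv.toLp 2 (Fin 2 → ℝ)).symm.trans MeasurableEquiv.finTwoArrow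

lemma mE_coe : ⇑mE = fun v : E2 => (v 0, v 1) := rfl

lemma mE_pres : MeasurePreserving mE := by
  have := (volume_preserving_finTwoArrow ℝ).comp
    (EuclideanSpace.volume_preserving_symm_measurableEquiv_toLp (Fin 2))
  exact this

lemma mE_symm_coe : ⇑mE.symm = jfun := by
  funext q
  apply mE.injective
  rw [MeasurableEquiv.apply_symm_apply]
  show q = ((jfun q) 0, (jfun q) 1)
  simp

lemma integral_comp_jfun (f : E2 → ℂ) : ∫ q : ℝ × ℝ, f (jfun q) = ∫ v : E2, f v := by
  rw [← mE_symm_coe]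
  exact (mE_pres.symm mE).integral_comp mE.symm.measurableEmbedding f

lemma integral_comp_mE (f : ℝ × ℝ → ℂ) : ∫ v : E2, f (mE v) = ∫ q : ℝ × ℝ, f q :=
  mE_pres.integral_comp mE.measurableEmbedding f

lemma integrable_comp_jfun {f : E2 → ℂ} (hf : Integrable f) :
    Integrable (fun q : ℝ × ℝ => f (jfun q)) := by
  rw [← mE_symm_coe]
  exact ((mE_pres.symm mE).integrable_comp_emb mE.symm.measurableEmbedding).2 hf

lemma jfun_continuous : Continuous jfun := by
  apply (EuclideanSpace.equiv (Fin 2) ℝ).symm.continuous.comp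
  refine continuous_pi fun i => ?_
  fin_cases i
  · exact continuous_fst
  · exact continuous_snd

end Aux12

noncomputable section Main12

def e2 : E2 →L[ℝ] ℝ × ℝ :=
  (EuclideanSpace.proj (0 : Fin 2)).prod (EuclideanSpace.proj (1 : Fin 2))

lemma e2_apply (v : E2) : e2 v = (v 0, v 1) := rfl

lemma e2_upper : ∀ v : E2, ‖v‖ ≤ 2 * (1 + ‖e2 v‖) ^ 1 := by
  intro v
  have h1 : ‖v‖ ≤ ‖v 0‖ + ‖v 1‖ := by
    rw [EuclideanSpace.norm_eq]
    simp only [Fin.sum_univ_two]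
    have h2 : ‖v 0‖ ^ 2 + ‖v 1‖ ^ 2 ≤ (‖v 0‖ + ‖v 1‖) ^ 2 := by
      nlinarith [norm_nonneg (v 0), norm_nonneg (v 1)]
    calc Real.sqrt (‖v 0‖ ^ 2 + ‖v 1‖ ^ 2) ≤ Real.sqrt ((‖v 0‖ + ‖v 1‖) ^ 2) :=
          Real.sqrt_le_sqrt h2
      _ = ‖v 0‖ + ‖v 1‖ := Real.sqrt_sq (by positivity)
  have h0 : ‖v 0‖ ≤ ‖e2 v‖ := norm_fst_le (e2 v)
  have h1' : ‖v 1‖ ≤ ‖e2 v‖ := norm_snd_le (e2 v)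
  have := norm_nonneg (e2 v)
  nlinarith

variable (φ : SchwartzMap (ℝ × ℝ) ℂ) (τ b : ℝ)

def PhiE : SchwartzMap E2 ℂ :=
  SchwartzMap.compCLM ℝ e2.hasTemperateGrowth ⟨1, 2, e2_upper⟩ φ

lemma PhiE_apply (v : E2) : PhiE φ v = φ (v 0, v 1) := rfl

def cb : E2 := jfun (b, 0)

def PhiB : SchwartzMap E2 ℂ :=
  SchwartzMap.compCLM ℝ (g := fun v : E2 => v + cb b)
    (by simpa using aux12_affine_temperate (ContinuousLinearMap.id ℝ E2) (cb b))
    ⟨1, 1 + ‖cb b‖, by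
      intro v
      have h1 : ‖v‖ ≤ ‖v + cb b‖ + ‖cb b‖ := by
        simpa using norm_add_le (v + cb b) (-cb b)
      have h2 := norm_nonneg (v + cb b)
      have h3 := norm_nonneg (cb b)
      nlinarith⟩ (PhiE φ)

lemma PhiB_apply (v : E2) : PhiB φ b v = φ (v 0 + b, v 1) := by
  show φ ((v + cb b) 0, (v + cb b) 1) = _
  simp [cb]

def shearL : E2 →L[ℝ] E2 :=
  ContinuousLinearMap.id ℝ E2 -
    τ • ((EuclideanSpace.proj (0 : Fin 2)).smulRight (EuclideanSpace.single (1 : Fin 2) (1 : ℝ)))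

lemma shearL_apply0 (v : E2) : shearL τ v 0 = v 0 := by
  simp [shearL, EuclideanSpace.single_apply]

lemma shearL_apply1 (v : E2) : shearL τ v 1 = v 1 - τ * v 0 := by
  simp [shearL, EuclideanSpace.single_apply]

lemma shearL_jfun (ξ u : ℝ) : shearL τ (jfun (ξ, u)) = jfun (ξ, u - τ * ξ) := by
  apply PiLp.ext
  intro i
  fin_cases i
  · rw [show ((⟨0, by norm_num⟩ : Fin 2)) = (0 : Fin 2) from rfl, shearL_apply0]
    simp
  · rw [show ((⟨1, by norm_num⟩ : Fin 2)) = (1 : Fin 2) from rfl, shearL_apply1]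
    simp

lemma shear_upper : ∀ v : E2, ‖v‖ ≤ (1 + |τ|) * (1 + ‖shearL τ v‖) ^ 1 := by
  intro v
  have hv : v = shearL τ v + (τ * v 0) • EuclideanSpace.single (1 : Fin 2) (1 : ℝ) := by
    apply PiLp.ext
    intro i
    fin_cases i
    · rw [show ((⟨0, by norm_num⟩ : Fin 2)) = (0 : Fin 2) from rfl]
      simp [shearL_apply0, EuclideanSpace.single_apply]
    · rw [show ((⟨1, by norm_num⟩ : Fin 2)) = (1 : Fin 2) from rfl]
      simp [shearL_apply1, EuclideanSpace.single_apply]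
  have h1 : ‖v‖ ≤ ‖shearL τ v‖ + ‖(τ * v 0) • EuclideanSpace.single (1 : Fin 2) (1 : ℝ)‖ := by
    conv_lhs => rw [hv]
    exact norm_add_le _ _
  have h2 : ‖(τ * v 0) • EuclideanSpace.single (1 : Fin 2) (1 : ℝ)‖ = |τ * v 0| := by
    rw [norm_smul, EuclideanSpace.norm_single]
    simp [Real.norm_eq_abs, abs_mul]
  have h3 : |v 0| ≤ ‖shearL τ v‖ := by
    have := aux12_coord_le (shearL τ v) 0
    rwa [shearL_apply0, Real.norm_eq_abs] at this
  have h4 : |τ * v 0| = |τ| * |v 0| := abs_mul _ _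
  have h5 := norm_nonneg (shearL τ v)
  have h6 := abs_nonneg τ
  have h7 := abs_nonneg (v 0)
  nlinarith

def FB : SchwartzMap E2 ℂ := SchwartzMap.fourierTransformCLM ℂ (PhiB φ b)

def PsiS : SchwartzMap E2 ℂ :=
  SchwartzMap.compCLM ℝ (shearL τ).hasTemperateGrowth ⟨1, 1 + |τ|, shear_upper τ⟩ (FB φ b)

lemma PsiS_apply (v : E2) : PsiS φ τ b v = FB φ b (shearL τ v) := rfl

def kfun : ℝ → ℂ := fun u => ∫ ξ : ℝ, PsiS φ τ b (jfun (ξ, u))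

def Fcan : ℝ × ℝ → ℂ := fun w =>
  ∫ p : ℝ × ℝ, φ p * Complex.exp
    (-(2 * (Real.pi : ℂ) * Complex.I * ((p.1 : ℂ) * (w.1 : ℂ) + (p.2 : ℂ) * (w.2 : ℂ))))


lemma inner_jfun (q : ℝ × ℝ) (w : E2) :
    (inner ℝ (jfun q) w : ℝ) = q.1 * w 0 + q.2 * w 1 := by
  simp [PiLp.inner_apply, RCLike.inner_apply, Fin.sum_univ_two]
  ring

lemma LA (w : E2) : 𝓕 (⇑(PhiE φ)) w = Fcan φ (e2 w) := by
  rw [Real.fourier_eq', ← integral_comp_jfun]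
  unfold Fcan
  simp only [e2_apply]
  congr 1
  funext q
  rw [inner_jfun, PhiE_apply]
  simp only [jfun_apply0, jfun_apply1, smul_eq_mul, Prod.mk.eta]
  rw [mul_comm]
  congr 1
  push_cast
  ring

lemma LB (w : E2) : 𝓕 (⇑(PhiB φ b)) w =
    Complex.exp (2 * Real.pi * Complex.I * b * (w 0)) * Fcan φ (e2 w) := by
  have hcomp : ⇑(PhiB φ b) = (⇑(PhiE φ)) ∘ (fun v : E2 => v + cb b) := rfl
  have hkey := VectorFourier.fourierIntegral_comp_add_right (𝕜 := ℝ) Real.fourierChar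
    (volume : Measure E2) (innerₗ E2) (⇑(PhiE φ)) (cb b)
  have h1 : 𝓕 (⇑(PhiB φ b)) w =
      Real.fourierChar ((innerₗ E2) (cb b) w) • 𝓕 (⇑(PhiE φ)) w := by
    rw [hcomp]
    show VectorFourier.fourierIntegral Real.fourierChar volume (innerₗ E2) _ w = _
    rw [hkey]
    rfl
  rw [h1, LA]
  have h2 : ((innerₗ E2) (cb b) w : ℝ) = b * w 0 := by
    show (inner ℝ (cb b) w : ℝ) = b * w 0
    unfold cb
    rw [inner_jfun]
    simp
  rw [h2, Circle.smul_def, Real.fourierChar_apply, ← mul_assoc]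
  congr 2
  push_cast
  ring

lemma PsiS_jfun (ξ u : ℝ) : PsiS φ τ b (jfun (ξ, u)) =
    Complex.exp (2 * Real.pi * Complex.I * b * ξ) * Fcan φ (ξ, u - τ * ξ) := by
  rw [PsiS_apply, shearL_jfun]
  have hFB : (FB φ b) (jfun (ξ, u - τ * ξ)) =
      𝓕 (⇑(PhiB φ b)) (jfun (ξ, u - τ * ξ)) := rfl
  rw [hFB, LB]
  simp [e2_apply]


lemma int_FB_j : Integrable (fun q : ℝ × ℝ => (FB φ b) (jfun q)) :=
  integrable_comp_jfun ((FB φ b).integrable)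

lemma int_PsiS_j : Integrable (fun q : ℝ × ℝ => (PsiS φ τ b) (jfun q)) :=
  integrable_comp_jfun ((PsiS φ τ b).integrable)

lemma LD (y : ℝ) : φ (τ * y + b, y) = 𝓕⁻ (kfun φ τ b) y := by
  have h0 : φ (τ * y + b, y) = PhiB φ b (jfun (τ * y, y)) := by
    rw [PhiB_apply]; norm_num
  have hFBi : Integrable (𝓕 (⇑(PhiB φ b))) := (FB φ b).integrable
  have hinv := (PhiB φ b).continuous.fourierInv_fourier_eq (PhiB φ b).integrable hFBi
  have h2 : φ (τ * y + b, y) =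
      ∫ w : E2, Complex.exp (↑(2 * Real.pi * (inner ℝ w (jfun (τ * y, y)) : ℝ)) * Complex.I) •
        𝓕 (⇑(PhiB φ b)) w := by
    rw [h0, ← congrFun hinv (jfun (τ * y, y)), Real.fourierInv_eq']
  rw [h2, ← integral_comp_jfun]
  have h3 : (fun q : ℝ × ℝ =>
      Complex.exp (↑(2 * Real.pi * (inner ℝ (jfun q) (jfun (τ * y, y)) : ℝ)) * Complex.I) •
        𝓕 (⇑(PhiB φ b)) (jfun q))
      = fun q : ℝ × ℝ => Complex.exp (↑(2 * Real.pi * (q.1 * (τ * y) + q.2 * y)) * Complex.I) *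
        (FB φ b) (jfun q) := by
    funext q
    rw [inner_jfun, smul_eq_mul]
    simp only [jfun_apply0, jfun_apply1]
    rfl
  rw [h3]
  have hint : Integrable (fun q : ℝ × ℝ =>
      Complex.exp (↑(2 * Real.pi * (q.1 * (τ * y) + q.2 * y)) * Complex.I) * (FB φ b) (jfun q)) := by
    apply (int_FB_j φ b).bdd_mul (c := 1)
    · apply Continuous.aestronglyMeasurable
      fun_prop
    · exact Filter.Eventually.of_forall (fun q => le_of_eq (Complex.norm_exp_ofReal_mul_I _))
  rw [Measure.volume_eq_prod] at hint
  rw [show (volume : Measure (ℝ × ℝ)) = (volume : Measure ℝ).prod volume from Measure.volume_eq_prod ℝ ℝ]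
  rw [integral_prod _ hint]
  have h4 : ∀ ξ : ℝ, (∫ η : ℝ, Complex.exp (↑(2 * Real.pi * (ξ * (τ * y) + η * y)) * Complex.I) *
      (FB φ b) (jfun (ξ, η)))
      = ∫ u : ℝ, Complex.exp (↑(2 * Real.pi * (u * y)) * Complex.I) *
        (PsiS φ τ b) (jfun (ξ, u)) := by
    intro ξ
    rw [← MeasureTheory.integral_add_right_eq_self (fun η : ℝ =>
      Complex.exp (↑(2 * Real.pi * (ξ * (τ * y) + η * y)) * Complex.I) *
        (FB φ b) (jfun (ξ, η))) (-(τ * ξ))]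
    congr 1
    funext u
    rw [PsiS_apply, shearL_jfun]
    have he : u + -(τ * ξ) = u - τ * ξ := by ring
    rw [he]
    have hr : ξ * (τ * y) + (u - τ * ξ) * y = u * y := by ring
    rw [hr]
  have h5 : (fun ξ : ℝ => ∫ η : ℝ,
      Complex.exp (↑(2 * Real.pi * (ξ * (τ * y) + η * y)) * Complex.I) * (FB φ b) (jfun (ξ, η)))
      = fun ξ : ℝ => ∫ u : ℝ, Complex.exp (↑(2 * Real.pi * (u * y)) * Complex.I) *
        (PsiS φ τ b) (jfun (ξ, u)) := funext h4
  rw [h5]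
  have hint2 : Integrable (Function.uncurry fun ξ u : ℝ =>
      Complex.exp (↑(2 * Real.pi * (u * y)) * Complex.I) * (PsiS φ τ b) (jfun (ξ, u)))
      ((volume : Measure ℝ).prod volume) := by
    rw [← Measure.volume_eq_prod]
    apply (int_PsiS_j φ τ b).bdd_mul (c := 1)
    · apply Continuous.aestronglyMeasurable
      fun_prop
    · exact Filter.Eventually.of_forall (fun q => le_of_eq (Complex.norm_exp_ofReal_mul_I _))
  rw [MeasureTheory.integral_integral_swap hint2]
  rw [Real.fourierInv_eq']
  congr 1
  funext u
  rw [MeasureTheory.integral_const_mul]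
  unfold kfun
  rw [smul_eq_mul]
  congr 2
  rw [show inner ℝ u y = u * y by simp [RCLike.inner_apply]; ring]


lemma kfun_integrable : Integrable (kfun φ τ b) := by
  have h := int_PsiS_j φ τ b
  rw [Measure.volume_eq_prod] at h
  exact h.integral_prod_right

lemma kfun_continuous : Continuous (kfun φ τ b) := by
  set Cb : ℝ := 4 *
    (Finset.Iic ((2, 0) : ℕ × ℕ)).sup (fun m => SchwartzMap.seminorm ℝ m.1 m.2) (PsiS φ τ b)
    with hCb
  have hb : ∀ (u ξ : ℝ), ‖PsiS φ τ b (jfun (ξ, u))‖ ≤ Cb / (1 + ‖ξ‖) ^ 2 := by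
    intro u ξ
    have key := SchwartzMap.one_add_le_sup_seminorm_apply (𝕜 := ℝ) (m := ((2, 0) : ℕ × ℕ))
      le_rfl le_rfl (PsiS φ τ b) (jfun (ξ, u))
    rw [norm_iteratedFDeriv_zero] at key
    norm_num at key
    have hc : ‖ξ‖ ≤ ‖jfun (ξ, u)‖ := by
      have := aux12_coord_le (jfun (ξ, u)) 0
      rwa [jfun_apply0] at this
    have h1 : (1 + ‖ξ‖) ^ 2 * ‖PsiS φ τ b (jfun (ξ, u))‖ ≤ Cb := by
      refine le_trans ?_ key
      have h2 : (1 + ‖ξ‖) ^ 2 ≤ (1 + ‖jfun (ξ, u)‖) ^ 2 := by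
        apply pow_le_pow_left₀ (by positivity)
        linarith
      have := norm_nonneg (PsiS φ τ b (jfun (ξ, u)))
      nlinarith
    rw [le_div_iff₀ (by positivity)]
    linarith [h1]
  apply MeasureTheory.continuous_of_dominated
    (bound := fun ξ : ℝ => Cb / (1 + ‖ξ‖) ^ 2)
  · intro u
    apply Continuous.aestronglyMeasurable
    exact (PsiS φ τ b).continuous.comp
      (jfun_continuous.comp (continuous_id.prodMk continuous_const))
  · intro u
    exact Filter.Eventually.of_forall (hb u)
  · have h := (integrable_one_add_norm (E := ℝ) (μ := volume) (r := 2)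
      (by simp [Module.finrank_self]))
    have hfe : (fun x : ℝ => Cb * (1 + ‖x‖) ^ (-(2:ℝ))) = fun ξ : ℝ => Cb / (1 + ‖ξ‖) ^ 2 := by
      funext ξ
      have h3 : (1 + ‖ξ‖) ^ ((2:ℝ)) = (1 + ‖ξ‖) ^ (2:ℕ) := by
        rw [show ((2:ℝ)) = ((2:ℕ):ℝ) by norm_num, Real.rpow_natCast]
      rw [Real.rpow_neg (by positivity), h3, div_eq_mul_inv]
    rw [← hfe]
    exact h.const_mul Cb
  · apply Filter.Eventually.of_forall
    intro ξ
    exact (PsiS φ τ b).continuous.comp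
      (jfun_continuous.comp (continuous_const.prodMk continuous_id))

lemma kfun_vanish {u : ℝ} (hu : u ∉ {s : ℝ | ∃ q ∈ tsupport (Fcan φ), s = τ * q.1 + q.2}) :
    kfun φ τ b u = 0 := by
  unfold kfun
  have hz : ∀ ξ : ℝ, PsiS φ τ b (jfun (ξ, u)) = 0 := by
    intro ξ
    rw [PsiS_jfun]
    have hq : (ξ, u - τ * ξ) ∉ tsupport (Fcan φ) := by
      intro hmem
      exact hu ⟨(ξ, u - τ * ξ), hmem, by ring⟩
    rw [image_eq_zero_of_notMem_tsupport hq, mul_zero]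
  simp [hz]

def lineCLM : ℝ →L[ℝ] ℝ × ℝ := (ContinuousLinearMap.id ℝ ℝ).smulRight (τ, (1 : ℝ))

def hSdef : SchwartzMap ℝ ℂ :=
  SchwartzMap.compCLM ℝ (g := fun y : ℝ => (τ * y + b, y))
    (by
      have hg : (fun y : ℝ => (τ * y + b, y)) = fun y => lineCLM τ y + (b, 0) := by
        funext y
        simp only [lineCLM, ContinuousLinearMap.smulRight_apply,
          ContinuousLinearMap.coe_id', id_eq, Prod.smul_mk, smul_eq_mul, Prod.mk_add_mk,
          mul_one, add_zero]
        exact congrArg (fun t => (t + b, y)) (mul_comm τ y)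
      rw [hg]
      exact aux12_affine_temperate _ _)
    ⟨1, 1, by
      intro y
      have h1 : ‖y‖ ≤ ‖(τ * y + b, y)‖ := by
        rw [Prod.norm_def]
        exact le_max_right _ _
      have h2 := norm_nonneg (τ * y + b, y)
      simp only [pow_one, one_mul]
      linarith⟩ φ

lemma hSdef_apply (y : ℝ) : hSdef φ τ b y = φ (τ * y + b, y) := rfl

end Main12

open MeasureTheory


/-- The reproducing identity (5.45): the restriction `h(y) = φ(τy + b, y)` of a Schwartz
function to a straight line is Schwartz, its one-dimensional frequency support lies in the
closure of the projected set `{τξ + η}`, and hence any bounded continuous multiplier equal to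
`1` on that set reproduces `𝓕h`. -/
theorem stmt12 (φ : SchwartzMap (ℝ × ℝ) ℂ) (τ b : ℝ)
    (Fφ : ℝ × ℝ → ℂ)
    (hFφ : ∀ w : ℝ × ℝ, Fφ w =
      ∫ p : ℝ × ℝ, φ p * Complex.exp
        (-(2 * (Real.pi : ℂ) * Complex.I * ((p.1 : ℂ) * (w.1 : ℂ) + (p.2 : ℂ) * (w.2 : ℂ)))))
    (h : ℝ → ℂ) (hh : ∀ y : ℝ, h y = φ (τ * y + b, y))
    (Fh : ℝ → ℂ)
    (hFh : ∀ ξ : ℝ, Fh ξ =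
      ∫ y : ℝ, h y * Complex.exp (-(2 * (Real.pi : ℂ) * Complex.I * (y : ℂ) * (ξ : ℂ)))) :
    (∃ hS : SchwartzMap ℝ ℂ, ∀ y : ℝ, hS y = h y) ∧
    tsupport Fh ⊆ closure {s : ℝ | ∃ q ∈ tsupport Fφ, s = τ * q.1 + q.2} ∧
    ∀ m : ℝ → ℂ, Continuous m → (∃ B : ℝ, ∀ σ : ℝ, ‖m σ‖ ≤ B) →
      (∀ σ ∈ closure {s : ℝ | ∃ q ∈ tsupport Fφ, s = τ * q.1 + q.2}, m σ = 1) →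
      ∀ ξ : ℝ, Fh ξ = m ξ * Fh ξ := by
  have hFcan : Fφ = Fcan φ := funext hFφ
  have hhS : ∀ y : ℝ, hSdef φ τ b y = h y := fun y => by rw [hh y, hSdef_apply]
  have hFh_eq : ∀ ξ : ℝ, Fh ξ = 𝓕 h ξ := by
    intro ξ
    rw [hFh ξ, Real.fourier_eq']
    congr 1
    funext y
    rw [smul_eq_mul, mul_comm]
    congr 1
    have hi : (inner ℝ y ξ : ℝ) = y * ξ := by simp [RCLike.inner_apply]; ring
    rw [hi]
    push_cast
    ring
  have hhk : h = 𝓕⁻ (kfun φ τ b) := by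
    funext y
    rw [hh y]
    exact LD φ τ b y
  have hiFk : Integrable (𝓕 (kfun φ τ b)) := by
    have he : 𝓕 (kfun φ τ b) = fun w : ℝ => hSdef φ τ b (-w) := by
      funext w
      have h1 := Real.fourierInv_eq_fourier_neg (kfun φ τ b) (-w)
      rw [neg_neg] at h1
      rw [← h1, ← hhk]
      exact (hhS (-w)).symm
    rw [he]
    exact (hSdef φ τ b).integrable.comp_neg
  have hFhk : ∀ ξ : ℝ, Fh ξ = kfun φ τ b ξ := by
    intro ξ
    rw [hFh_eq ξ, hhk]
    exact congrFun
      ((kfun_continuous φ τ b).fourier_fourierInv_eq (kfun_integrable φ τ b) hiFk) ξ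
  have hts : tsupport Fh ⊆ closure {s : ℝ | ∃ q ∈ tsupport Fφ, s = τ * q.1 + q.2} := by
    have hsub : Function.support Fh ⊆ {s : ℝ | ∃ q ∈ tsupport Fφ, s = τ * q.1 + q.2} := by
      intro s hs
      by_contra hns
      refine hs ?_
      rw [hFhk s]
      apply kfun_vanish φ τ b
      rw [hFcan] at hns
      exact hns
    exact closure_mono hsub
  refine ⟨⟨hSdef φ τ b, hhS⟩, hts, ?_⟩
  intro m hmc hmb hm1 ξ
  by_cases hξ : ξ ∈ tsupport Fh
  · rw [hm1 ξ (hts hξ), one_mul]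
  · rw [image_eq_zero_of_notMem_tsupport hξ, mul_zero]
end

section
/- Let u ∈ ℝ with |u| < 1 and let f : ℝ² → ℂ be a Schwartz function whose Fourier transform is supported in the cone {(ξ,η) : |η| ≤ |ξ|}. Then for every (x,y) ∈ ℝ², the limits lim_{ε→0⁺} ∫_{ε≤|t|≤1/ε} f(x − t, y − u t) dt/t and lim_{ε→0⁺} ∫_{ε≤|t|≤1/ε} f(x − t, y) dt/t both exist and are equal; that is, the principal-value Hilbert transform of f along the direction (1,u) coincides with its Hilbert transform along the direction (1,0). -/
open MeasureTheory Filter Topology intervalIntegral Set Real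

lemma abs_sin_div_le_one (t : ℝ) : |Real.sin t / t| ≤ 1 := by
  rcases eq_or_ne t 0 with h | h
  · simp [h]
  · rw [abs_div, div_le_one (abs_pos.2 h)]
    exact Real.abs_sin_le_abs

lemma contOn_sin_div {s : Set ℝ} (hs : (0:ℝ) ∉ s) : ContinuousOn (fun t => Real.sin t / t) s := by
  apply ContinuousOn.div Real.continuous_sin.continuousOn continuousOn_id
  intro t ht h; exact hs (h ▸ ht)

lemma contOn_cos_div {s : Set ℝ} (hs : (0:ℝ) ∉ s) : ContinuousOn (fun t => Real.cos t / t^2) s := by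
  apply ContinuousOn.div Real.continuous_cos.continuousOn (continuousOn_pow 2)
  intro t ht h
  rw [pow_eq_zero_iff (by norm_num)] at h
  exact hs (h ▸ ht)

lemma ibp_sin (a b : ℝ) (ha : 0 < a) (hab : a ≤ b) :
    ∫ t in a..b, Real.sin t / t
      = Real.cos a / a - Real.cos b / b - ∫ t in a..b, Real.cos t / t^2 := by
  have hsub : (0:ℝ) ∉ uIcc a b := by
    rw [uIcc_of_le hab]; intro h; exact absurd (lt_of_lt_of_le ha h.1) (by norm_num)
  have hderiv : ∀ t ∈ uIcc a b,
      HasDerivAt (fun s => -Real.cos s / s) (Real.sin t / t + Real.cos t / t^2) t := by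
    intro t ht
    have ht0 : t ≠ 0 := fun h => hsub (h ▸ ht)
    have h1 : HasDerivAt (fun s => -Real.cos s) (Real.sin t) t := by
      have := (Real.hasDerivAt_cos t).neg; rwa [neg_neg] at this
    have := h1.div (hasDerivAt_id t) ht0
    refine this.congr_deriv ?_
    simp only [id]
    field_simp
    ring
  have hint1 : IntervalIntegrable (fun t => Real.sin t / t) volume a b :=
    (contOn_sin_div hsub).intervalIntegrable
  have hint2 : IntervalIntegrable (fun t => Real.cos t / t^2) volume a b :=
    (contOn_cos_div hsub).intervalIntegrable
  have key := intervalIntegral.integral_eq_sub_of_hasDerivAt hderiv (hint1.add hint2)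
  rw [intervalIntegral.integral_add hint1 hint2] at key
  have : -Real.cos b / b - -Real.cos a / a = Real.cos a / a - Real.cos b / b := by ring
  rw [this] at key
  linarith [key]

lemma integral_inv_sq_le (a b : ℝ) (ha : 0 < a) (hab : a ≤ b) :
    ∫ t in a..b, (t:ℝ)^(-2 : ℤ) = a⁻¹ - b⁻¹ := by
  rw [integral_zpow (Or.inr ⟨by norm_num, by
    rw [uIcc_of_le hab]; intro h; exact absurd (lt_of_lt_of_le ha h.1) (by norm_num)⟩)]
  norm_num
  ring

lemma tail_bound (a b : ℝ) (ha : 1 ≤ a) (hab : a ≤ b) :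
    |∫ t in a..b, Real.sin t / t| ≤ 3 := by
  have ha0 : 0 < a := lt_of_lt_of_le one_pos ha
  have hb0 : 0 < b := lt_of_lt_of_le ha0 hab
  rw [ibp_sin a b ha0 hab]
  have h0 : (0:ℝ) ∉ uIcc a b := by
    rw [uIcc_of_le hab]; intro h; exact absurd (lt_of_lt_of_le ha0 h.1) (by norm_num)
  have h1 : |Real.cos a / a| ≤ 1 := by
    rw [abs_div, div_le_one (abs_pos.2 ha0.ne')]
    calc |Real.cos a| ≤ 1 := Real.abs_cos_le_one a
    _ ≤ |a| := by rwa [abs_of_pos ha0]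
  have h2 : |Real.cos b / b| ≤ 1 := by
    rw [abs_div, div_le_one (abs_pos.2 hb0.ne')]
    calc |Real.cos b| ≤ 1 := Real.abs_cos_le_one b
    _ ≤ |b| := by rw [abs_of_pos hb0]; linarith
  have h3 : |∫ t in a..b, Real.cos t / t^2| ≤ 1 := by
    have hint2 : IntervalIntegrable (fun t => Real.cos t / t^2) volume a b :=
      (contOn_cos_div h0).intervalIntegrable
    have habs := intervalIntegral.abs_integral_le_integral_abs (f := fun t => Real.cos t / t^2)
      (μ := volume) hab
    have hmono : ∫ t in a..b, |Real.cos t / t^2| ≤ ∫ t in a..b, (t:ℝ)^(-2:ℤ) := by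
      apply intervalIntegral.integral_mono_on hab hint2.abs
      · apply ContinuousOn.intervalIntegrable
        exact (continuousOn_id.zpow₀ (-2) (fun t ht => Or.inl (fun h => h0 (h ▸ ht))))
      · intro t ht
        have ht0 : 0 < t := lt_of_lt_of_le ha0 ht.1
        have hz : (t:ℝ)^(-2:ℤ) = (t^2)⁻¹ := by
          rw [zpow_neg]; norm_cast
        rw [abs_div, abs_of_pos (a := t^2) (by positivity), hz,
          div_le_iff₀ (by positivity), inv_mul_cancel₀ (by positivity)]
        exact Real.abs_cos_le_one t
    have hval : ∫ t in a..b, (t:ℝ)^(-2:ℤ) = a⁻¹ - b⁻¹ := integral_inv_sq_le a b ha0 hab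
    have : a⁻¹ - b⁻¹ ≤ 1 := by
      have : a⁻¹ ≤ 1 := by rw [inv_le_one_iff₀]; right; exact ha
      have : 0 < b⁻¹ := by positivity
      linarith
    calc |∫ t in a..b, Real.cos t / t^2| ≤ ∫ t in a..b, |Real.cos t / t^2| := habs
      _ ≤ a⁻¹ - b⁻¹ := by rw [← hval]; exact hmono
      _ ≤ 1 := this
  calc |Real.cos a / a - Real.cos b / b - ∫ t in a..b, Real.cos t / t^2|
      ≤ |Real.cos a / a| + |Real.cos b / b| + |∫ t in a..b, Real.cos t / t^2| := by
        apply (abs_sub _ _).trans; gcongr; exact abs_sub _ _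
    _ ≤ 3 := by linarith

lemma head_bound (a b : ℝ) (ha : 0 < a) (hab : a ≤ b) (hb : b ≤ 1) :
    |∫ t in a..b, Real.sin t / t| ≤ 1 := by
  have := intervalIntegral.norm_integral_le_of_norm_le_const (a := a) (b := b) (C := 1)
    (f := fun t => Real.sin t / t) (fun t _ => by
      rw [Real.norm_eq_abs]; exact abs_sin_div_le_one t)
  rw [Real.norm_eq_abs] at this
  calc |∫ t in a..b, Real.sin t / t| ≤ 1 * |b - a| := this
    _ ≤ 1 := by rw [one_mul, abs_of_nonneg (by linarith)]; linarith

lemma S_bound (a b : ℝ) (ha : 0 < a) (hab : a ≤ b) :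
    |∫ t in a..b, Real.sin t / t| ≤ 4 := by
  rcases le_or_gt b 1 with hb | hb
  · linarith [head_bound a b ha hab hb]
  rcases le_or_gt 1 a with ha1 | ha1
  · linarith [tail_bound a b ha1 hab]
  · have h0 : (0:ℝ) ∉ uIcc a b := by
      rw [uIcc_of_le hab]; intro h; exact absurd (lt_of_lt_of_le ha h.1) (by norm_num)
    have key : ∫ t in a..b, Real.sin t / t
        = (∫ t in a..1, Real.sin t / t) + ∫ t in (1:ℝ)..b, Real.sin t / t := by
      rw [intervalIntegral.integral_add_adjacent_intervals]
      · exact (contOn_sin_div (by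
          rw [uIcc_of_le ha1.le]; intro h; exact absurd (lt_of_lt_of_le ha h.1) (by norm_num)
          )).intervalIntegrable
      · exact (contOn_sin_div (by
          rw [uIcc_of_le hb.le]; intro h; exact absurd h.1 (by norm_num))).intervalIntegrable
    rw [key]
    have b1 := head_bound a 1 ha ha1.le le_rfl
    have b2 := tail_bound 1 b le_rfl hb.le
    calc |(∫ t in a..1, Real.sin t / t) + ∫ t in (1:ℝ)..b, Real.sin t / t|
        ≤ |∫ t in a..1, Real.sin t / t| + |∫ t in (1:ℝ)..b, Real.sin t / t| := abs_add_le _ _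
      _ ≤ 4 := by linarith

noncomputable def SiVal : ℝ :=
  (∫ t in Ioc (0:ℝ) 1, Real.sin t / t) + Real.cos 1 - ∫ t in Ioi (1:ℝ), Real.cos t / t^2

lemma cos_div_sq_integrableOn : IntegrableOn (fun t => Real.cos t / t^2) (Ioi (1:ℝ)) := by
  have hg : IntegrableOn (fun t : ℝ => t ^ (-2 : ℝ)) (Ioi (1:ℝ)) :=
    integrableOn_Ioi_rpow_of_lt (by norm_num) one_pos
  apply Integrable.mono' hg
  · exact (contOn_cos_div (by intro h; exact absurd (mem_Ioi.1 h) (by norm_num))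
      ).aestronglyMeasurable measurableSet_Ioi
  · filter_upwards [ae_restrict_mem measurableSet_Ioi] with t ht
    have ht1 : (1:ℝ) < t := ht
    have ht0 : 0 < t := lt_trans one_pos ht1
    rw [Real.norm_eq_abs, abs_div, abs_of_pos (by positivity : (0:ℝ) < t^2)]
    rw [Real.rpow_neg ht0.le, div_le_iff₀ (by positivity)]
    have : (t:ℝ) ^ (2:ℝ) = t^2 := by
      rw [Real.rpow_two]
    rw [← this, inv_mul_cancel₀ (by positivity)]
    exact Real.abs_cos_le_one t

lemma tail_tendsto :
    Tendsto (fun b => ∫ t in (1:ℝ)..b, Real.sin t / t) atTop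
      (𝓝 (Real.cos 1 - ∫ t in Ioi (1:ℝ), Real.cos t / t^2)) := by
  have h1 : Tendsto (fun b : ℝ => Real.cos b / b) atTop (𝓝 0) := by
    apply squeeze_zero_norm (fun b => ?_) (tendsto_inv_atTop_zero.comp tendsto_abs_atTop_atTop)
    rw [Real.norm_eq_abs, abs_div]
    rcases eq_or_ne b 0 with h | h
    · simp [h]
    · rw [div_le_iff₀ (abs_pos.2 h)]
      have : |b|⁻¹ * |b| = 1 := inv_mul_cancel₀ (abs_pos.2 h).ne'
      simp only [Function.comp_apply]
      rw [inv_mul_eq_div, le_div_iff₀ (abs_pos.2 h)]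
      calc |Real.cos b| * |b| ≤ 1 * |b| := by
            apply mul_le_mul_of_nonneg_right (Real.abs_cos_le_one b) (abs_nonneg b)
        _ = |b| := one_mul _
  have h2 : Tendsto (fun b => ∫ t in (1:ℝ)..b, Real.cos t / t^2) atTop
      (𝓝 (∫ t in Ioi (1:ℝ), Real.cos t / t^2)) :=
    MeasureTheory.intervalIntegral_tendsto_integral_Ioi 1 cos_div_sq_integrableOn tendsto_id
  have key : Tendsto (fun b => Real.cos 1 / 1 - Real.cos b / b - ∫ t in (1:ℝ)..b, Real.cos t / t^2)
      atTop (𝓝 (Real.cos 1 - ∫ t in Ioi (1:ℝ), Real.cos t / t^2)) := by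
    have := ((tendsto_const_nhds (x := Real.cos 1 / 1)).sub h1).sub h2
    simpa using this
  apply key.congr'
  filter_upwards [Ici_mem_atTop (1:ℝ)] with b hb
  exact (ibp_sin 1 b one_pos hb).symm

lemma head_tendsto :
    Tendsto (fun a => ∫ t in a..(1:ℝ), Real.sin t / t) (𝓝[>] (0:ℝ))
      (𝓝 (∫ t in Ioc (0:ℝ) 1, Real.sin t / t)) := by
  have key : Tendsto (fun a => ∫ t, (Ioc a 1).indicator (fun t => Real.sin t / t) t)
      (𝓝[>] (0:ℝ)) (𝓝 (∫ t, (Ioc (0:ℝ) 1).indicator (fun t => Real.sin t / t) t)) := by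
    apply MeasureTheory.tendsto_integral_filter_of_dominated_convergence
      (bound := (Ioc (0:ℝ) 1).indicator (fun _ => 1))
    · filter_upwards with a
      apply AEStronglyMeasurable.indicator _ measurableSet_Ioc
      exact (Measurable.div Real.measurable_sin measurable_id).aestronglyMeasurable
    · filter_upwards [self_mem_nhdsWithin] with a (ha : 0 < a)
      filter_upwards with t
      rw [Real.norm_eq_abs]
      by_cases h : t ∈ (Ioc a 1)
      · rw [indicator_of_mem h, indicator_of_mem (mem_Ioc.2 ⟨lt_of_lt_of_le ha h.1.le, h.2⟩)]
        exact abs_sin_div_le_one t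
      · rw [indicator_of_notMem h]
        simp only [abs_zero]
        by_cases h' : t ∈ Ioc (0:ℝ) 1
        · rw [indicator_of_mem h']; norm_num
        · rw [indicator_of_notMem h']
    · rw [integrable_indicator_iff measurableSet_Ioc]
      exact integrableOn_const measure_Ioc_lt_top.ne
    · filter_upwards with t
      by_cases h : t ∈ Ioc (0:ℝ) 1
      · rw [indicator_of_mem h]
        apply Tendsto.congr' _ tendsto_const_nhds
        filter_upwards [Ioo_mem_nhdsGT_of_mem (mem_Ico.2 ⟨le_rfl, h.1⟩)]
          with a ha
        rw [indicator_of_mem (mem_Ioc.2 ⟨ha.2, h.2⟩)]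
      · rw [indicator_of_notMem h]
        apply Tendsto.congr' _ tendsto_const_nhds
        filter_upwards [self_mem_nhdsWithin] with a (ha : 0 < a)
        rw [indicator_of_notMem (fun hmem => h (mem_Ioc.2 ⟨lt_of_lt_of_le ha (mem_Ioc.1 hmem).1.le, (mem_Ioc.1 hmem).2⟩))]
  have : (∫ t, (Ioc (0:ℝ) 1).indicator (fun t => Real.sin t / t) t)
      = ∫ t in Ioc (0:ℝ) 1, Real.sin t / t := MeasureTheory.integral_indicator measurableSet_Ioc
  rw [this] at key
  apply key.congr'
  filter_upwards [Ioo_mem_nhdsGT_of_mem (mem_Ico.2 ⟨le_rfl, one_pos⟩)] with a ha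
  rw [MeasureTheory.integral_indicator measurableSet_Ioc, intervalIntegral.integral_of_le ha.2.le]

lemma S_tendsto (c : ℝ) (hc : 0 < c) :
    Tendsto (fun ε => ∫ t in (c*ε)..(c/ε), Real.sin t / t) (𝓝[>] (0:ℝ)) (𝓝 SiVal) := by
  have hmul : Tendsto (fun ε : ℝ => c * ε) (𝓝[>] (0:ℝ)) (𝓝[>] (0:ℝ)) := by
    apply tendsto_nhdsWithin_of_tendsto_nhds_of_eventually_within
    · have h : Tendsto (fun ε : ℝ => c * ε) (𝓝 (0:ℝ)) (𝓝 (c * 0)) :=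
        Continuous.tendsto (by continuity) 0
      have h2 := h.mono_left (nhdsWithin_le_nhds (s := Ioi (0:ℝ)))
      simpa using h2
    · filter_upwards [self_mem_nhdsWithin] with ε (hε : 0 < ε)
      exact mul_pos hc hε
  have hdiv : Tendsto (fun ε : ℝ => c / ε) (𝓝[>] (0:ℝ)) atTop := by
    simp only [div_eq_mul_inv]
    exact tendsto_inv_nhdsGT_zero.const_mul_atTop hc
  have hhead := head_tendsto.comp hmul
  have htail := tail_tendsto.comp hdiv
  have hsum := hhead.add htail
  have hval : (∫ t in Ioc (0:ℝ) 1, Real.sin t / t)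
      + (Real.cos 1 - ∫ t in Ioi (1:ℝ), Real.cos t / t^2) = SiVal := by
    rw [SiVal]; ring
  rw [hval] at hsum
  apply hsum.congr'
  filter_upwards [Ioo_mem_nhdsGT_of_mem (mem_Ico.2 ⟨le_rfl,
    lt_min (by positivity : (0:ℝ) < 1/c) hc⟩)] with ε hε
  obtain ⟨hε0, hεlt⟩ := hε
  have h1 : c * ε ≤ 1 := by
    have h := (lt_min_iff.1 hεlt).1
    rw [lt_div_iff₀ hc] at h
    nlinarith
  have h2 : (1:ℝ) ≤ c / ε := by
    have h := (lt_min_iff.1 hεlt).2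
    rw [le_div_iff₀ hε0]
    linarith
  have hpos1 : (0:ℝ) ∉ uIcc (c*ε) 1 := by
    rw [uIcc_of_le h1]; intro h; exact absurd (lt_of_lt_of_le (by positivity) h.1) (by norm_num)
  have hpos2 : (0:ℝ) ∉ uIcc (1:ℝ) (c/ε) := by
    rw [uIcc_of_le h2]; intro h; exact absurd h.1 (by norm_num)
  simp only [Function.comp_apply]
  rw [← intervalIntegral.integral_add_adjacent_intervals
    ((contOn_sin_div hpos1).intervalIntegrable) ((contOn_sin_div hpos2).intervalIntegrable)]

lemma key_subst (l ε : ℝ) (hl : 0 < l) (hε : 0 < ε) :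
    ∫ t in ε..(1/ε), Real.sin (2*Real.pi*l*t) / t
      = ∫ t in (2*Real.pi*l*ε)..(2*Real.pi*l/ε), Real.sin t / t := by
  set c := 2*Real.pi*l with hc
  have hc0 : 0 < c := by positivity
  have huIcc : ∀ t ∈ uIcc ε (1/ε), 0 < t := by
    intro t ht
    rcases le_total ε (1/ε) with h | h
    · rw [uIcc_of_le h] at ht; exact lt_of_lt_of_le hε ht.1
    · rw [uIcc_of_ge h] at ht; exact lt_of_lt_of_le (by positivity) ht.1
  have h1 : ∫ t in ε..(1/ε), Real.sin (c*t) / t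
      = ∫ t in ε..(1/ε), c * ((fun s => Real.sin s / s) (c*t)) := by
    apply intervalIntegral.integral_congr
    intro t ht
    have ht0 : 0 < t := huIcc t ht
    show Real.sin (c*t) / t = c * (Real.sin (c*t) / (c*t))
    rw [mul_div_assoc', mul_div_mul_left _ _ hc0.ne']
  rw [h1, intervalIntegral.integral_const_mul,
    intervalIntegral.integral_comp_mul_left (fun s => Real.sin s / s) hc0.ne']
  simp only [smul_eq_mul, ← mul_assoc, mul_inv_cancel₀ hc0.ne', one_mul]
  rw [mul_one_div]

lemma K_tendsto_aux {l : ℝ} (hl : 0 < l) :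
    Tendsto (fun ε => ∫ t in ε..(1/ε), Real.sin (2*Real.pi*l*t) / t) (𝓝[>] (0:ℝ))
      (𝓝 SiVal) := by
  apply (S_tendsto (2*Real.pi*l) (by positivity)).congr'
  filter_upwards [self_mem_nhdsWithin] with ε (hε : 0 < ε)
  exact (key_subst l ε hl hε).symm

lemma K_tendsto (l : ℝ) :
    Tendsto (fun ε => ∫ t in ε..(1/ε), Real.sin (2*Real.pi*l*t) / t) (𝓝[>] (0:ℝ))
      (𝓝 (Real.sign l * SiVal)) := by
  rcases lt_trichotomy l 0 with hl | hl | hl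
  · have hpos : 0 < -l := by linarith
    have heq : ∀ ε : ℝ, ∫ t in ε..(1/ε), Real.sin (2*Real.pi*l*t) / t
        = -∫ t in ε..(1/ε), Real.sin (2*Real.pi*(-l)*t) / t := by
      intro ε
      rw [← intervalIntegral.integral_neg]
      apply intervalIntegral.integral_congr
      intro t _
      show Real.sin (2*Real.pi*l*t) / t = -(Real.sin (2*Real.pi*(-l)*t) / t)
      have h : 2*Real.pi*l*t = -(2*Real.pi*(-l)*t) := by ring
      rw [h, Real.sin_neg]
      ring
    simp only [heq]
    rw [Real.sign_of_neg hl]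
    have := (K_tendsto_aux hpos).neg
    simpa using this
  · simp [hl, Real.sign_zero]
  · rw [Real.sign_of_pos hl]
    rw [one_mul]
    exact K_tendsto_aux hl

lemma K_bound (l ε : ℝ) (hε : 0 < ε) (hε1 : ε ≤ 1) :
    |∫ t in ε..(1/ε), Real.sin (2*Real.pi*l*t) / t| ≤ 4 := by
  have hεinv : ε ≤ 1/ε := by
    rw [le_div_iff₀ hε]; nlinarith
  rcases lt_trichotomy l 0 with hl | hl | hl
  · have hpos : 0 < -l := by linarith
    have heq : ∫ t in ε..(1/ε), Real.sin (2*Real.pi*l*t) / t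
        = -∫ t in ε..(1/ε), Real.sin (2*Real.pi*(-l)*t) / t := by
      rw [← intervalIntegral.integral_neg]
      apply intervalIntegral.integral_congr
      intro t _
      show Real.sin (2*Real.pi*l*t) / t = -(Real.sin (2*Real.pi*(-l)*t) / t)
      have h : 2*Real.pi*l*t = -(2*Real.pi*(-l)*t) := by ring
      rw [h, Real.sin_neg]; ring
    rw [heq, abs_neg, key_subst (-l) ε hpos hε]
    exact S_bound _ _ (by positivity) (by
      apply mul_le_mul_of_nonneg_left hεinv (by positivity) |>.trans_eq
      rw [mul_one_div])
  · simp [hl]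
  · rw [key_subst l ε hl hε]
    exact S_bound _ _ (by positivity) (by
      apply mul_le_mul_of_nonneg_left hεinv (by positivity) |>.trans_eq
      rw [mul_one_div])

lemma K_cont_aux (a b : ℝ) (ha : 0 < a) :
    Continuous fun l => ∫ t in Ioc a b, Real.sin (2*Real.pi*l*t) / t := by
  apply MeasureTheory.continuous_of_dominated (bound := fun _ => 1/a)
  · intro l
    exact ((Real.measurable_sin.comp (measurable_const.mul measurable_id)).div
      measurable_id).aestronglyMeasurable
  · intro l
    filter_upwards [ae_restrict_mem measurableSet_Ioc] with t ht
    have ht0 : 0 < t := lt_of_lt_of_le ha ht.1.le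
    rw [Real.norm_eq_abs, abs_div, abs_of_pos ht0]
    calc |Real.sin (2*Real.pi*l*t)| / t ≤ 1 / t := by
          gcongr
          exact abs_le.2 ⟨Real.neg_one_le_sin _, Real.sin_le_one _⟩
      _ ≤ 1 / a := by gcongr; exact ht.1.le
  · exact integrableOn_const measure_Ioc_lt_top.ne
  · filter_upwards with t
    exact (Real.continuous_sin.comp (by continuity)).div_const t

lemma K_cont (ε : ℝ) (hε : 0 < ε) :
    Continuous fun l => ∫ t in ε..(1/ε), Real.sin (2*Real.pi*l*t) / t := by
  rcases le_or_gt ε (1/ε) with hle | hlt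
  · have heq : ∀ l : ℝ, ∫ t in ε..(1/ε), Real.sin (2*Real.pi*l*t) / t
        = ∫ t in Ioc ε (1/ε), Real.sin (2*Real.pi*l*t) / t := fun l =>
      intervalIntegral.integral_of_le hle
    simp only [heq]
    exact K_cont_aux ε (1/ε) hε
  · have heq : ∀ l : ℝ, ∫ t in ε..(1/ε), Real.sin (2*Real.pi*l*t) / t
        = -∫ t in Ioc (1/ε) ε, Real.sin (2*Real.pi*l*t) / t := fun l =>
      intervalIntegral.integral_of_ge hlt.le
    simp only [heq]
    exact (K_cont_aux (1/ε) ε (by positivity)).neg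

open scoped FourierTransform

noncomputable def eEq : EuclideanSpace ℝ (Fin 2) ≃L[ℝ] ℝ × ℝ :=
  (EuclideanSpace.equiv (Fin 2) ℝ).trans (ContinuousLinearEquiv.finTwoArrow ℝ ℝ)
noncomputable def phiEq : EuclideanSpace ℝ (Fin 2) ≃ᵐ ℝ × ℝ :=
  (MeasurableEquiv.toLp 2 (Fin 2 → ℝ)).symm.trans (MeasurableEquiv.finTwoArrow)

lemma phiEq_measurePreserving : MeasurePreserving phiEq volume volume :=
  (MeasureTheory.volume_preserving_finTwoArrow ℝ).comp
    (EuclideanSpace.volume_preserving_symm_measurableEquiv_toLp (Fin 2))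

lemma inner_two (v w : EuclideanSpace ℝ (Fin 2)) :
    @inner ℝ _ _ v w = v 0 * w 0 + v 1 * w 1 := by
  simp [PiLp.inner_apply, Fin.sum_univ_two, RCLike.inner_apply]; ring

lemma fourier_transfer (f : SchwartzMap (ℝ × ℝ) ℂ) (Ff : ℝ × ℝ → ℂ)
    (hFf : ∀ w : ℝ × ℝ, Ff w =
      ∫ p : ℝ × ℝ, f p * Complex.exp
        (-(2 * (Real.pi : ℂ) * Complex.I * ((p.1 : ℂ) * (w.1 : ℂ) + (p.2 : ℂ) * (w.2 : ℂ))))) :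
    Continuous Ff ∧ Integrable Ff ∧
      ∀ p : ℝ × ℝ, (f p : ℂ) =
        ∫ w : ℝ × ℝ, Ff w * Complex.exp
          (((2 * Real.pi * (p.1 * w.1 + p.2 * w.2) : ℝ) : ℂ) * Complex.I) := by
  set g : SchwartzMap (EuclideanSpace ℝ (Fin 2)) ℂ :=
    SchwartzMap.compCLMOfContinuousLinearEquiv ℝ eEq f with hg
  have hgv : ∀ v, g v = f (eEq v) := fun _ => rfl
  have hF : ∀ w : EuclideanSpace ℝ (Fin 2), 𝓕 (⇑g) w = Ff (eEq w) := by
    intro w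
    rw [Real.fourier_eq', hFf (eEq w),
      ← phiEq_measurePreserving.integral_comp' (f := phiEq)
        (fun p => f p * Complex.exp
          (-(2 * (Real.pi : ℂ) * Complex.I *
            ((p.1 : ℂ) * ((eEq w).1 : ℂ) + (p.2 : ℂ) * ((eEq w).2 : ℂ)))))]
    congr 1
    funext v
    have h1 : phiEq v = eEq v := rfl
    rw [h1, hgv v, smul_eq_mul, mul_comm]
    congr 1
    rw [inner_two]
    show Complex.exp _ = Complex.exp _
    congr 1
    have e1 : (eEq v).1 = v 0 := rfl
    have e2 : (eEq v).2 = v 1 := rfl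
    have e3 : (eEq w).1 = w 0 := rfl
    have e4 : (eEq w).2 = w 1 := rfl
    rw [e1, e2, e3, e4]
    push_cast
    ring
  have hFint : Integrable (𝓕 (⇑g)) := by
    have : 𝓕 (⇑g) = ⇑(SchwartzMap.fourierTransformCLM ℂ g) := rfl
    rw [this]
    exact (SchwartzMap.fourierTransformCLM ℂ g).integrable
  have hFfeq : ∀ q : ℝ × ℝ, Ff q = 𝓕 (⇑g) (eEq.symm q) := by
    intro q
    rw [hF (eEq.symm q), eEq.apply_symm_apply]
  have hcont : Continuous Ff := by
    have : Continuous fun q : ℝ × ℝ => 𝓕 (⇑g) (eEq.symm q) :=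
      (SchwartzMap.fourierTransformCLM ℂ g).continuous.comp eEq.symm.continuous
    exact this.congr (fun q => (hFfeq q).symm)
  have hphisymm : ∀ q : ℝ × ℝ, phiEq.symm q = eEq.symm q := by
    intro q
    have : phiEq (eEq.symm q) = q := by
      show ((eEq.symm q : EuclideanSpace ℝ (Fin 2)) 0, (eEq.symm q) 1) = q
      rfl
    apply phiEq.injective
    rw [MeasurableEquiv.apply_symm_apply, this]
  have hFfint : Integrable Ff := by
    have h1 := integrable_map_equiv (μ := (volume : Measure (ℝ × ℝ))) phiEq.symm (𝓕 (⇑g))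
    rw [(phiEq_measurePreserving.symm phiEq).map_eq] at h1
    have h2 : Integrable ((𝓕 (⇑g)) ∘ ⇑phiEq.symm) volume := h1.1 hFint
    apply h2.congr
    filter_upwards with q
    show 𝓕 (⇑g) (phiEq.symm q) = Ff q
    rw [hphisymm q, ← hFfeq q]
  refine ⟨hcont, hFfint, fun p => ?_⟩
  have hinv := g.continuous.fourierInv_fourier_eq g.integrable hFint
  have h1 : f p = g (eEq.symm p) := by rw [hgv, eEq.apply_symm_apply]
  rw [h1, ← congrFun hinv (eEq.symm p), Real.fourierInv_eq',
    ← phiEq_measurePreserving.integral_comp' (f := phiEq)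
      (fun w => Ff w * Complex.exp
        (((2 * Real.pi * (p.1 * w.1 + p.2 * w.2) : ℝ) : ℂ) * Complex.I))]
  congr 1
  funext v
  show _ • 𝓕 (⇑g) v = Ff (phiEq v) * Complex.exp _
  have h2 : phiEq v = eEq v := rfl
  rw [h2, hF v, smul_eq_mul, mul_comm]
  congr 2
  rw [inner_two]
  have h3 : (eEq.symm p) 0 = p.1 := rfl
  have h4 : (eEq.symm p) 1 = p.2 := rfl
  rw [h3, h4]
  have h5 : (eEq v).1 = v 0 := rfl
  have h6 : (eEq v).2 = v 1 := rfl
  rw [h5, h6]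
  push_cast
  ring_nf

section Helpers

lemma exp_neg_sub_exp (θ : ℝ) :
    Complex.exp (((-θ : ℝ) : ℂ) * Complex.I) - Complex.exp (((θ : ℝ) : ℂ) * Complex.I)
      = -2 * Complex.I * ((Real.sin θ : ℝ) : ℂ) := by
  rw [Complex.exp_mul_I, Complex.exp_mul_I]
  push_cast
  rw [Complex.cos_neg, Complex.sin_neg]
  ring

lemma Aset_eq (ε : ℝ) (hε : 0 < ε) :
    {t : ℝ | ε ≤ |t| ∧ |t| ≤ 1/ε} = Icc (-(1/ε)) (-ε) ∪ Icc ε (1/ε) := by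
  ext t
  simp only [mem_setOf_eq, mem_union, mem_Icc]
  rcases le_or_gt 0 t with h | h
  · rw [abs_of_nonneg h]
    constructor
    · rintro ⟨h1, h2⟩; right; exact ⟨h1, h2⟩
    · rintro (⟨h1, h2⟩ | ⟨h1, h2⟩)
      · constructor <;> linarith
      · exact ⟨h1, h2⟩
  · rw [abs_of_neg h]
    constructor
    · rintro ⟨h1, h2⟩; left; exact ⟨by linarith, by linarith⟩
    · rintro (⟨h1, h2⟩ | ⟨h1, h2⟩)
      · exact ⟨by linarith, by linarith⟩
      · constructor <;> linarith

lemma Aset_measurable (ε : ℝ) : MeasurableSet {t : ℝ | ε ≤ |t| ∧ |t| ≤ 1/ε} := by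
  have : {t : ℝ | ε ≤ |t| ∧ |t| ≤ 1/ε} = abs ⁻¹' (Icc ε (1/ε)) := rfl
  rw [this]
  exact (isClosed_Icc.preimage continuous_abs).measurableSet

lemma Aset_subset (ε : ℝ) : {t : ℝ | ε ≤ |t| ∧ |t| ≤ 1/ε} ⊆ Icc (-(1/ε)) (1/ε) := by
  intro t ht
  exact abs_le.1 ht.2

lemma split_integral (ε : ℝ) (hε : 0 < ε) (hε1 : ε ≤ 1) (G : ℝ → ℂ)
    (hG : ContinuousOn G {t : ℝ | t ≠ 0}) :
    ∫ t in {t : ℝ | ε ≤ |t| ∧ |t| ≤ 1/ε}, G t = ∫ t in ε..(1/ε), (G t + G (-t)) := by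
  have hεinv : ε ≤ 1/ε := by rw [le_div_iff₀ hε]; nlinarith
  have hsub1 : Icc ε (1/ε) ⊆ {t : ℝ | t ≠ 0} := fun t ht => ne_of_gt (lt_of_lt_of_le hε ht.1)
  have hsub2 : Icc (-(1/ε)) (-ε) ⊆ {t : ℝ | t ≠ 0} := fun t ht =>
    ne_of_lt (lt_of_le_of_lt ht.2 (by linarith))
  have hint1 : IntegrableOn G (Icc ε (1/ε)) := (hG.mono hsub1).integrableOn_Icc
  have hint2 : IntegrableOn G (Icc (-(1/ε)) (-ε)) := (hG.mono hsub2).integrableOn_Icc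
  have hdisj : Disjoint (Icc (-(1/ε)) (-ε)) (Icc ε (1/ε)) := by
    rw [Set.disjoint_left]
    intro t ht1 ht2
    have := ht1.2; have := ht2.1; linarith
  rw [Aset_eq ε hε, setIntegral_union hdisj measurableSet_Icc hint2 hint1]
  have h1 : ∫ t in Icc (-(1/ε)) (-ε), G t = ∫ t in (-(1/ε))..(-ε), G t := by
    rw [intervalIntegral.integral_of_le (by linarith), integral_Icc_eq_integral_Ioc]
  have h2 : ∫ t in Icc ε (1/ε), G t = ∫ t in ε..(1/ε), G t := by
    rw [intervalIntegral.integral_of_le hεinv, integral_Icc_eq_integral_Ioc]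
  have huIcc : uIcc ε (1/ε) ⊆ {t : ℝ | t ≠ 0} := by
    rw [uIcc_of_le hεinv]; exact hsub1
  have hi2 : IntervalIntegrable G volume ε (1/ε) :=
    (hG.mono huIcc).intervalIntegrable
  have hi1 : IntervalIntegrable (fun t => G (-t)) volume ε (1/ε) := by
    apply ContinuousOn.intervalIntegrable
    apply hG.comp continuousOn_neg
    intro t ht
    have : t ≠ 0 := huIcc ht
    simpa using this
  rw [h1, h2,
    show (∫ t in (-(1/ε))..(-ε), G t) = ∫ t in ε..(1/ε), G (-t) from
      (intervalIntegral.integral_comp_neg G).symm,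
    ← intervalIntegral.integral_add hi1 hi2]
  apply intervalIntegral.integral_congr
  intro t _
  exact add_comm _ _

end Helpers

lemma inner_int (l ε : ℝ) (hε : 0 < ε) (hε1 : ε ≤ 1) :
    ∫ t in {t : ℝ | ε ≤ |t| ∧ |t| ≤ 1/ε},
        Complex.exp (((-(2*Real.pi*l*t) : ℝ) : ℂ) * Complex.I) / (t:ℂ)
      = (-2*Complex.I) * ((∫ t in ε..(1/ε), Real.sin (2*Real.pi*l*t)/t : ℝ) : ℂ) := by
  have hεinv : ε ≤ 1/ε := by rw [le_div_iff₀ hε]; nlinarith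
  have hG : ContinuousOn
      (fun t : ℝ => Complex.exp (((-(2*Real.pi*l*t) : ℝ) : ℂ) * Complex.I) / (t:ℂ))
      {t : ℝ | t ≠ 0} := by
    apply ContinuousOn.div
    · apply Continuous.continuousOn
      apply Complex.continuous_exp.comp
      exact (Complex.continuous_ofReal.comp (by continuity)).mul continuous_const
    · exact Complex.continuous_ofReal.continuousOn
    · intro t ht
      exact Complex.ofReal_ne_zero.2 ht
  rw [split_integral ε hε hε1 _ hG]
  have hcongr : ∀ t ∈ uIcc ε (1/ε),
      (fun s : ℝ => Complex.exp (((-(2*Real.pi*l*s) : ℝ) : ℂ) * Complex.I) / (s:ℂ)) t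
        + (fun s : ℝ => Complex.exp (((-(2*Real.pi*l*s) : ℝ) : ℂ) * Complex.I) / (s:ℂ)) (-t)
      = (-2*Complex.I) * ((Real.sin (2*Real.pi*l*t)/t : ℝ) : ℂ) := by
    intro t ht
    rw [uIcc_of_le hεinv] at ht
    have ht0 : t ≠ 0 := ne_of_gt (lt_of_lt_of_le hε ht.1)
    have ht0' : (t:ℂ) ≠ 0 := Complex.ofReal_ne_zero.2 ht0
    simp only
    have h1 : (-(2*Real.pi*l*(-t)) : ℝ) = 2*Real.pi*l*t := by ring
    rw [h1]
    have key := exp_neg_sub_exp (2*Real.pi*l*t)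
    rw [show ((-t : ℝ) : ℂ) = -(t:ℂ) from Complex.ofReal_neg t, div_neg, ← sub_eq_add_neg,
      div_sub_div_same, key, Complex.ofReal_div, mul_div_assoc]
  rw [intervalIntegral.integral_congr (g := fun t =>
      (-2*Complex.I) * ((Real.sin (2*Real.pi*l*t)/t : ℝ) : ℂ)) (fun t ht => hcongr t ht),
    intervalIntegral.integral_const_mul]
  congr 1
  exact intervalIntegral.integral_ofReal


lemma hilbert_tendsto (f : SchwartzMap (ℝ × ℝ) ℂ) (Ff : ℝ × ℝ → ℂ)
    (hcont : Continuous Ff) (hFfint : Integrable Ff)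
    (hinv : ∀ p : ℝ × ℝ, (f p : ℂ) =
      ∫ w : ℝ × ℝ, Ff w * Complex.exp (((2 * Real.pi * (p.1 * w.1 + p.2 * w.2) : ℝ) : ℂ) * Complex.I))
    (u x y : ℝ) :
    Tendsto (fun ε : ℝ => ∫ t in {t : ℝ | ε ≤ |t| ∧ |t| ≤ 1/ε}, f (x - t, y - u*t) / (t:ℂ))
      (𝓝[>] (0:ℝ))
      (𝓝 (∫ w : ℝ × ℝ, Ff w * Complex.exp (((2*Real.pi*(x*w.1+y*w.2) : ℝ) : ℂ) * Complex.I) *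
        ((-2*Complex.I) * ((Real.sign (w.1 + u*w.2) * SiVal : ℝ) : ℂ)))) := by
  have hEcont : Continuous fun w : ℝ × ℝ =>
      Complex.exp (((2*Real.pi*(x*w.1+y*w.2) : ℝ) : ℂ) * Complex.I) :=
    Complex.continuous_exp.comp ((Complex.continuous_ofReal.comp (by continuity)).mul
      continuous_const)
  have key : ∀ ε : ℝ, 0 < ε → ε ≤ 1 →
      (∫ t in {t : ℝ | ε ≤ |t| ∧ |t| ≤ 1/ε}, f (x - t, y - u*t) / (t:ℂ))
        = ∫ w : ℝ × ℝ, Ff w * Complex.exp (((2*Real.pi*(x*w.1+y*w.2) : ℝ) : ℂ) * Complex.I) *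
            ((-2*Complex.I) *
              ((∫ t in ε..(1/ε), Real.sin (2*Real.pi*(w.1+u*w.2)*t)/t : ℝ) : ℂ)) := by
    intro ε h0 h1
    set A := {t : ℝ | ε ≤ |t| ∧ |t| ≤ 1/ε} with hA
    have hAfin : volume A < ⊤ :=
      lt_of_le_of_lt (measure_mono (Aset_subset ε)) measure_Icc_lt_top
    haveI : IsFiniteMeasure (volume.restrict A) :=
      ⟨by rwa [Measure.restrict_apply_univ]⟩
    set F : ℝ → ℝ × ℝ → ℂ := fun t w =>
      Ff w * Complex.exp (((2*Real.pi*(x*w.1+y*w.2) : ℝ) : ℂ) * Complex.I) *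
        (Complex.exp (((-(2*Real.pi*(w.1+u*w.2)*t) : ℝ) : ℂ) * Complex.I) / (t:ℂ)) with hF
    have step1 : ∀ t : ℝ, t ≠ 0 → f (x - t, y - u*t) / (t:ℂ) = ∫ w : ℝ × ℝ, F t w := by
      intro t ht
      rw [hinv (x - t, y - u*t), ← MeasureTheory.integral_div]
      congr 1
      funext w
      show Ff w * Complex.exp (((2*Real.pi*((x-t)*w.1+(y-u*t)*w.2) : ℝ) : ℂ) * Complex.I) / (t:ℂ)
        = F t w
      have harg : (2*Real.pi*((x-t)*w.1+(y-u*t)*w.2) : ℝ)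
          = 2*Real.pi*(x*w.1+y*w.2) + -(2*Real.pi*(w.1+u*w.2)*t) := by ring
      rw [hF, harg, Complex.ofReal_add, add_mul, Complex.exp_add]
      ring
    have step2 : (∫ t in A, f (x - t, y - u*t) / (t:ℂ)) = ∫ t in A, ∫ w : ℝ × ℝ, F t w := by
      apply setIntegral_congr_fun (Aset_measurable ε)
      intro t ht
      exact step1 t (fun h => by simp [h] at ht; linarith [ht.1])
    have hFmeas : Measurable (Function.uncurry F) := by
      apply Measurable.mul
      apply Measurable.mul
      · exact hcont.measurable.comp measurable_snd
      · exact hEcont.measurable.comp measurable_snd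
      apply Measurable.div
      · apply Complex.measurable_exp.comp
        apply Measurable.mul _ measurable_const
        apply Complex.measurable_ofReal.comp
        have : Measurable fun p : ℝ × (ℝ × ℝ) => -(2*Real.pi*(p.2.1+u*p.2.2)*p.1) := by
          fun_prop
        exact this
      · exact Complex.measurable_ofReal.comp measurable_fst
    have hprodeq : ((volume : Measure ℝ).restrict A).prod (volume : Measure (ℝ × ℝ))
        = (((volume : Measure ℝ)).prod (volume : Measure (ℝ × ℝ))).restrict (A ×ˢ univ) := by
      rw [← Measure.prod_restrict, Measure.restrict_univ]
    have hintF : Integrable (Function.uncurry F) ((volume.restrict A).prod volume) := by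
      apply Integrable.mono' (g := fun p : ℝ × (ℝ × ℝ) => ε⁻¹ * ‖Ff p.2‖)
      · exact Integrable.mul_prod (integrable_const (μ := (volume : Measure ℝ).restrict A) ε⁻¹) hFfint.norm
      · exact hFmeas.aestronglyMeasurable
      · rw [hprodeq]
        filter_upwards [ae_restrict_mem ((Aset_measurable ε).prod MeasurableSet.univ)] with p hp
        have ht : ε ≤ |p.1| := hp.1.1
        show ‖F p.1 p.2‖ ≤ ε⁻¹ * ‖Ff p.2‖
        rw [hF]
        simp only [norm_mul, norm_div, Complex.norm_exp_ofReal_mul_I,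
          Complex.norm_real, Real.norm_eq_abs]
        rw [mul_one, mul_comm]
        have hFfnn : (0:ℝ) ≤ ‖Ff p.2‖ := norm_nonneg _
        have hle : 1/|p.1| ≤ ε⁻¹ := by
          rw [one_div]
          exact inv_anti₀ h0 ht
        exact mul_le_mul_of_nonneg_right hle hFfnn
    have step3 : (∫ t in A, ∫ w : ℝ × ℝ, F t w) = ∫ w : ℝ × ℝ, ∫ t in A, F t w :=
      integral_integral_swap hintF
    have step4 : ∀ w : ℝ × ℝ, (∫ t in A, F t w)
        = Ff w * Complex.exp (((2*Real.pi*(x*w.1+y*w.2) : ℝ) : ℂ) * Complex.I) *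
            ((-2*Complex.I) *
              ((∫ t in ε..(1/ε), Real.sin (2*Real.pi*(w.1+u*w.2)*t)/t : ℝ) : ℂ)) := by
      intro w
      rw [hF]
      simp only
      rw [MeasureTheory.integral_const_mul, hA, inner_int (w.1+u*w.2) ε h0 h1]
    rw [step2, step3]
    exact integral_congr_ae (Filter.Eventually.of_forall step4)
  -- dominated convergence for the right-hand side family
  have main : Tendsto (fun ε : ℝ =>
      ∫ w : ℝ × ℝ, Ff w * Complex.exp (((2*Real.pi*(x*w.1+y*w.2) : ℝ) : ℂ) * Complex.I) *
        ((-2*Complex.I) * ((∫ t in ε..(1/ε), Real.sin (2*Real.pi*(w.1+u*w.2)*t)/t : ℝ) : ℂ)))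
      (𝓝[>] (0:ℝ))
      (𝓝 (∫ w : ℝ × ℝ, Ff w * Complex.exp (((2*Real.pi*(x*w.1+y*w.2) : ℝ) : ℂ) * Complex.I) *
        ((-2*Complex.I) * ((Real.sign (w.1 + u*w.2) * SiVal : ℝ) : ℂ)))) := by
    apply MeasureTheory.tendsto_integral_filter_of_dominated_convergence
      (bound := fun w : ℝ × ℝ => ‖Ff w‖ * 8)
    · filter_upwards [self_mem_nhdsWithin] with ε (hε : 0 < ε)
      apply Continuous.aestronglyMeasurable
      apply (hcont.mul hEcont).mul
      apply continuous_const.mul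
      apply Complex.continuous_ofReal.comp
      exact (K_cont ε hε).comp (continuous_fst.add (continuous_const.mul continuous_snd))
    · filter_upwards [Ioc_mem_nhdsGT_of_mem (Set.mem_Ico.2 ⟨le_rfl, one_pos⟩)] with ε hε
      filter_upwards with w
      rw [norm_mul, norm_mul, norm_mul]
      simp only [Complex.norm_exp_ofReal_mul_I, Complex.norm_real, Real.norm_eq_abs]
      rw [mul_one]
      have h4 := K_bound (w.1+u*w.2) ε hε.1 hε.2
      have h2 : ‖-2*Complex.I‖ = 2 := by simp
      rw [h2]
      have : (2:ℝ) * |∫ t in ε..(1/ε), Real.sin (2*Real.pi*(w.1+u*w.2)*t)/t| ≤ 8 := by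
        linarith
      calc ‖Ff w‖ * (2 * |∫ t in ε..(1/ε), Real.sin (2*Real.pi*(w.1+u*w.2)*t)/t|)
          ≤ ‖Ff w‖ * 8 := by
            exact mul_le_mul_of_nonneg_left this (norm_nonneg _)
        _ = ‖Ff w‖ * 8 := rfl
    · exact hFfint.norm.mul_const 8
    · filter_upwards with w
      have h := K_tendsto (w.1 + u*w.2)
      have hc : Continuous fun k : ℝ =>
          Ff w * Complex.exp (((2*Real.pi*(x*w.1+y*w.2) : ℝ) : ℂ) * Complex.I) *
            ((-2*Complex.I) * (k:ℂ)) := by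
        apply continuous_const.mul
        exact continuous_const.mul Complex.continuous_ofReal
      exact (hc.tendsto _).comp h
  apply main.congr'
  filter_upwards [Ioc_mem_nhdsGT_of_mem (Set.mem_Ico.2 ⟨le_rfl, one_pos⟩)] with ε hε
  exact (key ε hε.1 hε.2).symm



lemma sign_cone {u ξ η : ℝ} (hu : |u| < 1) (h : |η| ≤ |ξ|) :
    Real.sign (ξ + u*η) = Real.sign ξ := by
  rcases lt_trichotomy ξ 0 with hξ | hξ | hξ
  · have h1 : u*η ≤ |u| * |η| := le_trans (le_abs_self _) (abs_mul u η).le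
    have h2 : |u| * |η| ≤ |u| * |ξ| := mul_le_mul_of_nonneg_left h (abs_nonneg u)
    have h3 : |u| * |ξ| < |ξ| := by nlinarith [abs_pos.2 (ne_of_lt hξ), abs_nonneg u]
    have hneg : ξ + u*η < 0 := by rw [abs_of_neg hξ] at h2 h3; linarith
    rw [Real.sign_of_neg hξ, Real.sign_of_neg hneg]
  · subst hξ
    have hη : η = 0 := abs_nonpos_iff.1 (by simpa using h)
    subst hη
    simp
  · have h1 : -(u*η) ≤ |u| * |η| := le_trans (neg_le_abs _) (abs_mul u η).le
    have h2 : |u| * |η| ≤ |u| * |ξ| := mul_le_mul_of_nonneg_left h (abs_nonneg u)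
    have h3 : |u| * |ξ| < |ξ| := by nlinarith [abs_pos.2 (ne_of_gt hξ), abs_nonneg u]
    have hpos : 0 < ξ + u*η := by rw [abs_of_pos hξ] at h2 h3; linarith
    rw [Real.sign_of_pos hξ, Real.sign_of_pos hpos]

/-- For a Schwartz function with frequency support in the cone `{|η| ≤ |ξ|}` around the
horizontal frequency axis, the principal-value Hilbert transform along any direction `(1,u)`
with `|u| < 1` exists pointwise and coincides with the Hilbert transform along `(1,0)`. -/
theorem stmt16 (u : ℝ) (hu : |u| < 1) (f : SchwartzMap (ℝ × ℝ) ℂ)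
    (Ff : ℝ × ℝ → ℂ)
    (hFf : ∀ w : ℝ × ℝ, Ff w =
      ∫ p : ℝ × ℝ, f p * Complex.exp
        (-(2 * (Real.pi : ℂ) * Complex.I * ((p.1 : ℂ) * (w.1 : ℂ) + (p.2 : ℂ) * (w.2 : ℂ)))))
    (hsupp : tsupport Ff ⊆ {w : ℝ × ℝ | |w.2| ≤ |w.1|}) :
    ∀ x y : ℝ, ∃ L : ℂ,
      Tendsto (fun ε : ℝ =>
          ∫ t in {t : ℝ | ε ≤ |t| ∧ |t| ≤ 1 / ε}, f (x - t, y - u * t) / (t : ℂ))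
        (𝓝[>] (0 : ℝ)) (𝓝 L) ∧
      Tendsto (fun ε : ℝ =>
          ∫ t in {t : ℝ | ε ≤ |t| ∧ |t| ≤ 1 / ε}, f (x - t, y) / (t : ℂ))
        (𝓝[>] (0 : ℝ)) (𝓝 L) := by
  intro x y
  obtain ⟨hcont, hFfint, hinv⟩ := fourier_transfer f Ff hFf
  refine ⟨_, hilbert_tendsto f Ff hcont hFfint hinv u x y, ?_⟩
  have h0 := hilbert_tendsto f Ff hcont hFfint hinv 0 x y
  simp only [zero_mul, sub_zero, add_zero] at h0
  have heq : (∫ w : ℝ × ℝ, Ff w *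
        Complex.exp (((2*Real.pi*(x*w.1+y*w.2) : ℝ) : ℂ) * Complex.I) *
        ((-2*Complex.I) * ((Real.sign (w.1 + u*w.2) * SiVal : ℝ) : ℂ)))
      = ∫ w : ℝ × ℝ, Ff w *
        Complex.exp (((2*Real.pi*(x*w.1+y*w.2) : ℝ) : ℂ) * Complex.I) *
        ((-2*Complex.I) * ((Real.sign w.1 * SiVal : ℝ) : ℂ)) := by
    congr 1
    funext w
    by_cases hw : Ff w = 0
    · simp [hw]
    · have hmem : w ∈ tsupport Ff := subset_tsupport Ff (Function.mem_support.2 hw)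
      have hcone : |w.2| ≤ |w.1| := hsupp hmem
      rw [sign_cone hu hcone]
  rw [heq]
  exact h0
end

section
/- Let f = 1_{B} be the indicator of the closed unit ball B = {q ∈ ℝ² : |q| ≤ 1}. Then: (a) for every x ∈ ℝ² with |x| > 1, the integral ∫_ℝ 1_B( x − t·x/|x| ) dt/t is absolutely convergent and equals log( (|x|+1)/(|x|−1) ); (b) for every p ∈ (1, 2], ∫_{{x ∈ ℝ² : |x| ≥ 2}} ( log( (|x|+1)/(|x|−1) ) )^p dx = ∞. Consequently, for the radial unit vector field v(x) = x/|x| (which is constant along rays from the origin), the Hilbert transform H_v f(x) = ∫ f(x − t v(x)) dt/t of f does not belong to L^p(ℝ²) for any p ∈ (1,2]. -/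
open MeasureTheory
open Set

/-- The Euclidean norm on `ℝ × ℝ`. -/
noncomputable def enorm2 (v : ℝ × ℝ) : ℝ := Real.sqrt (v.1 ^ 2 + v.2 ^ 2)

lemma enorm2_smul (c : ℝ) (v : ℝ × ℝ) : enorm2 (c • v) = |c| * enorm2 v := by
  simp only [enorm2, Prod.smul_fst, Prod.smul_snd, smul_eq_mul]
  rw [mul_pow, mul_pow, ← mul_add, Real.sqrt_mul (sq_nonneg c), Real.sqrt_sq_eq_abs]

lemma abs_fst_le_enorm2 (v : ℝ × ℝ) : |v.1| ≤ enorm2 v := by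
  rw [← Real.sqrt_sq_eq_abs]
  exact Real.sqrt_le_sqrt (by nlinarith [sq_nonneg v.2])

lemma enorm2_le_add (v : ℝ × ℝ) : enorm2 v ≤ |v.1| + |v.2| := by
  have h : v.1 ^ 2 + v.2 ^ 2 ≤ (|v.1| + |v.2|) ^ 2 := by
    nlinarith [abs_nonneg v.1, abs_nonneg v.2, sq_abs v.1, sq_abs v.2]
  calc enorm2 v ≤ Real.sqrt ((|v.1| + |v.2|) ^ 2) := Real.sqrt_le_sqrt h
    _ = _ := Real.sqrt_sq (by positivity)

lemma continuous_enorm2 : Continuous enorm2 := by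
  unfold enorm2; fun_prop

lemma key_fun (x : ℝ × ℝ) (hx : 1 < enorm2 x) :
    (fun t : ℝ =>
        (if enorm2 (x - t • ((enorm2 x)⁻¹ • x)) ≤ 1 then (1 : ℝ) else 0) / t)
      = (Icc (enorm2 x - 1) (enorm2 x + 1)).indicator (fun t => t⁻¹) := by
  have hr : 0 < enorm2 x := lt_trans one_pos hx
  funext t
  have key : enorm2 (x - t • ((enorm2 x)⁻¹ • x)) = |enorm2 x - t| := by
    have h1 : x - t • ((enorm2 x)⁻¹ • x) = (1 - t * (enorm2 x)⁻¹) • x := by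
      rw [smul_smul, sub_smul, one_smul]
    have h2 : 1 - t * (enorm2 x)⁻¹ = (enorm2 x - t) / enorm2 x := by
      field_simp
    rw [h1, enorm2_smul, h2, abs_div, abs_of_pos hr, div_mul_cancel₀ _ hr.ne']
  rw [key]
  rcases le_or_gt |enorm2 x - t| 1 with h | h
  · obtain ⟨h1, h2⟩ := abs_le.mp h
    rw [if_pos h, indicator_of_mem (mem_Icc.mpr ⟨by linarith, by linarith⟩), one_div]
  · rw [if_neg (not_le.mpr h), indicator_of_notMem, zero_div]
    intro hm
    obtain ⟨h1, h2⟩ := mem_Icc.mp hm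
    exact absurd (abs_le.mpr ⟨by linarith, by linarith⟩) (not_le.mpr h)

lemma partA (x : ℝ × ℝ) (hx : 1 < enorm2 x) :
    Integrable (fun t : ℝ =>
        (if enorm2 (x - t • ((enorm2 x)⁻¹ • x)) ≤ 1 then (1 : ℝ) else 0) / t) volume ∧
      (∫ t : ℝ,
          (if enorm2 (x - t • ((enorm2 x)⁻¹ • x)) ≤ 1 then (1 : ℝ) else 0) / t) =
        Real.log ((enorm2 x + 1) / (enorm2 x - 1)) := by
  have hr : 0 < enorm2 x - 1 := by linarith
  rw [key_fun x hx]
  constructor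
  · rw [integrable_indicator_iff measurableSet_Icc]
    refine ContinuousOn.integrableOn_Icc ?_
    exact continuousOn_inv₀.mono fun t ht => by
      simp only [mem_compl_iff, mem_singleton_iff]
      have := (mem_Icc.mp ht).1; intro h; rw [h] at this; linarith
  · rw [integral_indicator measurableSet_Icc, integral_Icc_eq_integral_Ioc,
      ← intervalIntegral.integral_of_le (by linarith),
      integral_inv_of_pos (by linarith) (by linarith)]

lemma not_int_inv : ¬ IntegrableOn (fun a : ℝ => a⁻¹) (Ioi (2:ℝ)) volume := by
  intro h
  have h' : IntegrableOn (fun x : ℝ => x ^ (-1:ℝ)) (Ioi (2:ℝ)) volume :=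
    h.congr_fun (fun x _ => by
      rw [show (-1:ℝ) = ((-1:ℤ):ℝ) by norm_num, Real.rpow_intCast, zpow_neg_one])
      measurableSet_Ioi
  have := (integrableOn_Ioi_rpow_iff (by norm_num : (0:ℝ) < 2)).mp h'
  linarith

lemma lint_top : ∫⁻ a : ℝ in Ici (2:ℝ), ENNReal.ofReal ((4 * a)⁻¹) = ⊤ := by
  by_contra hne
  have hm : AEStronglyMeasurable (fun a : ℝ => (4 * a)⁻¹) (volume.restrict (Ici 2)) :=
    ((measurable_const_mul 4).inv).aestronglyMeasurable
  have hpos : 0 ≤ᵐ[volume.restrict (Ici (2:ℝ))] fun a => (4 * a)⁻¹ := by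
    refine (ae_restrict_iff' measurableSet_Ici).2 (ae_of_all _ fun a ha => ?_)
    have h0 : (0:ℝ) < a := lt_of_lt_of_le two_pos ha
    positivity
  have hint : Integrable (fun a : ℝ => (4 * a)⁻¹) (volume.restrict (Ici 2)) :=
    (lintegral_ofReal_ne_top_iff_integrable hm hpos).1 hne
  have h2 : IntegrableOn (fun a : ℝ => (4 * a)⁻¹) (Ioi (2:ℝ)) volume :=
    IntegrableOn.mono_set hint Ioi_subset_Ici_self
  have h3 := h2.const_mul (4:ℝ)
  have heq : (fun a : ℝ => 4 * (4 * a)⁻¹) = fun a : ℝ => a⁻¹ := funext fun a => by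
    rw [mul_inv]; ring
  exact not_int_inv (heq ▸ h3)

lemma partB (p : ℝ) (hp1 : 1 < p) (hp2 : p ≤ 2) :
    (∫⁻ x : ℝ × ℝ in {x : ℝ × ℝ | 2 ≤ enorm2 x},
      ENNReal.ofReal (Real.log ((enorm2 x + 1) / (enorm2 x - 1)) ^ p)) = ⊤ := by
  have hp0 : (0:ℝ) ≤ p := by linarith
  set T : Set (ℝ × ℝ) := {x | 2 ≤ x.1 ∧ 0 ≤ x.2 ∧ x.2 ≤ x.1} with hTdef
  have hTm : MeasurableSet T :=
    (measurableSet_le measurable_const measurable_fst).inter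
      ((measurableSet_le measurable_const measurable_snd).inter
        (measurableSet_le measurable_snd measurable_fst))
  have hr2T : ∀ x ∈ T, 2 ≤ enorm2 x := by
    rintro x ⟨hx1, _, _⟩
    exact le_trans hx1 ((le_abs_self x.1).trans (abs_fst_le_enorm2 x))
  have hpt : ∀ x ∈ T, ENNReal.ofReal ((4 * x.1 ^ 2)⁻¹)
      ≤ ENNReal.ofReal (Real.log ((enorm2 x + 1) / (enorm2 x - 1)) ^ p) := by
    rintro x hx
    obtain ⟨hx1, hx2, hx3⟩ := hx
    have hr2 : 2 ≤ enorm2 x := hr2T x ⟨hx1, hx2, hx3⟩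
    set r := enorm2 x with hrdef
    have hx1pos : (0:ℝ) < x.1 := by linarith
    have hrle : r ≤ 2 * x.1 := by
      refine (enorm2_le_add x).trans ?_
      rw [abs_of_nonneg hx1pos.le, abs_of_nonneg hx2]; linarith
    set L := Real.log ((r + 1) / (r - 1)) with hLdef
    have hlog : 2 / (r + 1) ≤ L := by
      have h1 := Real.one_sub_inv_le_log_of_pos
        (show (0:ℝ) < (r + 1) / (r - 1) by apply div_pos <;> linarith)
      rw [inv_div] at h1
      have h3 : 1 - (r - 1) / (r + 1) = 2 / (r + 1) := by
        field_simp
        norm_num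
      calc 2 / (r + 1) = 1 - (r - 1) / (r + 1) := h3.symm
        _ ≤ L := h1
    set b := (2 * x.1)⁻¹ with hbdef
    have hb1 : 0 < b := by positivity
    have hb2 : b ≤ 1 := inv_le_one_of_one_le₀ (by linarith)
    have hbL : b ≤ L := by
      refine le_trans ?_ hlog
      rw [hbdef, inv_eq_one_div, div_le_div_iff₀ (by linarith) (by linarith)]
      nlinarith
    have h4 : b ^ (2:ℝ) ≤ b ^ p := Real.rpow_le_rpow_of_exponent_ge hb1 hb2 hp2
    have h5 : b ^ p ≤ L ^ p := Real.rpow_le_rpow hb1.le hbL hp0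
    have h6 : b ^ (2:ℝ) = (4 * x.1 ^ 2)⁻¹ := by
      rw [show (2:ℝ) = ((2:ℕ):ℝ) by norm_num, Real.rpow_natCast, inv_pow]
      congr 1; ring
    exact ENNReal.ofReal_le_ofReal (by rw [← h6]; exact h4.trans h5)
  have hle1 : (∫⁻ x : ℝ × ℝ in T, ENNReal.ofReal ((4 * x.1 ^ 2)⁻¹))
      ≤ ∫⁻ x : ℝ × ℝ in {x : ℝ × ℝ | 2 ≤ enorm2 x},
          ENNReal.ofReal (Real.log ((enorm2 x + 1) / (enorm2 x - 1)) ^ p) :=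
    (setLIntegral_mono' hTm hpt).trans (lintegral_mono_set hr2T)
  rw [eq_top_iff]
  refine le_trans (le_of_eq ?_) hle1
  -- show ⊤ = ∫⁻ x in T, ofReal ((4 * x.1^2)⁻¹)
  have hFm : Measurable fun x : ℝ × ℝ => ENNReal.ofReal ((4 * x.1 ^ 2)⁻¹) :=
    (((measurable_fst.pow_const 2).const_mul 4).inv).ennreal_ofReal
  rw [← lintegral_indicator hTm, Measure.volume_eq_prod,
    lintegral_prod _ ((hFm.indicator hTm).aemeasurable)]
  have hinner : ∀ a : ℝ,
      (∫⁻ b : ℝ, T.indicator (fun x => ENNReal.ofReal ((4 * x.1 ^ 2)⁻¹)) (a, b))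
      = (Ici (2:ℝ)).indicator (fun a => ENNReal.ofReal ((4 * a)⁻¹)) a := by
    intro a
    by_cases ha : 2 ≤ a
    · have heq : (fun b : ℝ => T.indicator (fun x => ENNReal.ofReal ((4 * x.1 ^ 2)⁻¹)) (a, b))
          = (Icc (0:ℝ) a).indicator fun _ => ENNReal.ofReal ((4 * a ^ 2)⁻¹) := by
        funext b
        by_cases hb : b ∈ Icc (0:ℝ) a
        · have hmemT : (a, b) ∈ T := ⟨ha, hb.1, hb.2⟩
          rw [indicator_of_mem hb, indicator_of_mem hmemT]
        · rw [indicator_of_notMem hb, indicator_of_notMem]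
          rintro ⟨-, h1, h2⟩; exact hb ⟨h1, h2⟩
      have haI : a ∈ Ici (2:ℝ) := ha
      rw [heq, lintegral_indicator measurableSet_Icc, setLIntegral_const,
        indicator_of_mem haI, Real.volume_Icc, ← ENNReal.ofReal_mul (by positivity)]
      congr 1
      have ha0 : (0:ℝ) < a := by linarith
      field_simp
      ring
    · have haI : a ∉ Ici (2:ℝ) := ha
      rw [indicator_of_notMem haI]
      have hz : ∀ b : ℝ, T.indicator (fun x => ENNReal.ofReal ((4 * x.1 ^ 2)⁻¹)) (a, b) = 0 :=
        fun b => indicator_of_notMem (fun h => ha h.1) _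
      simp only [hz]
      exact lintegral_zero
  simp_rw [hinner]
  rw [lintegral_indicator measurableSet_Ici]
  exact lint_top.symm


/-- The counterexample from the proof of Corollary 1.2: for the radial unit vector field
`v(x) = x/|x|`, the Hilbert transform of the indicator of the unit ball equals
`log((|x|+1)/(|x|−1))` for `|x| > 1` and fails to lie in `L^p(ℝ²)` for every `p ∈ (1,2]`. -/
theorem stmt18 :
    (∀ x : ℝ × ℝ, 1 < enorm2 x →
      Integrable (fun t : ℝ =>
        (if enorm2 (x - t • ((enorm2 x)⁻¹ • x)) ≤ 1 then (1 : ℝ) else 0) / t) volume ∧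
      (∫ t : ℝ,
          (if enorm2 (x - t • ((enorm2 x)⁻¹ • x)) ≤ 1 then (1 : ℝ) else 0) / t) =
        Real.log ((enorm2 x + 1) / (enorm2 x - 1))) ∧
    (∀ p : ℝ, 1 < p → p ≤ 2 →
      (∫⁻ x : ℝ × ℝ in {x : ℝ × ℝ | 2 ≤ enorm2 x},
        ENNReal.ofReal (Real.log ((enorm2 x + 1) / (enorm2 x - 1)) ^ p)) = ⊤) ∧
    (∀ p : ℝ, 1 < p → p ≤ 2 →
      ¬ MemLp (fun x : ℝ × ℝ =>
          ∫ t : ℝ, (if enorm2 (x - t • ((enorm2 x)⁻¹ • x)) ≤ 1 then (1 : ℝ) else 0) / t)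
        (ENNReal.ofReal p) volume) := by
  
  refine ⟨partA, partB, fun p hp1 hp2 hmem => ?_⟩
  set f : (ℝ × ℝ) → ℝ := fun x : ℝ × ℝ =>
    ∫ t : ℝ, (if enorm2 (x - t • ((enorm2 x)⁻¹ • x)) ≤ 1 then (1 : ℝ) else 0) / t with hf
  have hS : MeasurableSet {x : ℝ × ℝ | 2 ≤ enorm2 x} :=
    measurableSet_le measurable_const continuous_enorm2.measurable
  have hfeq : ∀ x ∈ {x : ℝ × ℝ | 2 ≤ enorm2 x},
      (‖f x‖ₑ) ^ p
        = ENNReal.ofReal (Real.log ((enorm2 x + 1) / (enorm2 x - 1)) ^ p) := by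
    intro x hx
    have hx2 : 2 ≤ enorm2 x := hx
    have hx1 : 1 < enorm2 x := by linarith
    have hfx : f x = Real.log ((enorm2 x + 1) / (enorm2 x - 1)) := (partA x hx1).2
    have hL0 : 0 ≤ Real.log ((enorm2 x + 1) / (enorm2 x - 1)) :=
      Real.log_nonneg (by rw [le_div_iff₀ (by linarith)]; linarith)
    rw [hfx, Real.enorm_eq_ofReal hL0, ← ENNReal.ofReal_rpow_of_nonneg hL0 (by linarith)]
  have htop : (∫⁻ x : ℝ × ℝ, (‖f x‖ₑ) ^ p) = ⊤ := by
    rw [eq_top_iff, ← partB p hp1 hp2, ← setLIntegral_congr_fun hS (fun x hx => hfeq x hx)]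
    exact setLIntegral_le_lintegral _ _
  have hlt := hmem.2
  rw [eLpNorm_eq_lintegral_rpow_enorm_toReal
      (by simp only [ne_eq, ENNReal.ofReal_eq_zero, not_le]; linarith) ENNReal.ofReal_ne_top,
    ENNReal.toReal_ofReal (by linarith), htop,
    ENNReal.top_rpow_of_pos (by positivity)] at hlt
  exact lt_irrefl _ hlt
end
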